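/- arXiv:2410.18116 — 3 statements merged into one kernel-verified Lean document; each statement's English description precedes it below -/
import Mathlib

section
/- For p ≥ 2 and all x, y ∈ ℝ^m, the inequality ‖x + y‖_p^2 ≤ ‖x‖_p^2 + 2⟨J(x), y⟩ + (p-1)‖y‖_p^2 holds, where (J(x))_i = ‖x‖_p^{2-p} |x_i|^{p-1} sign(x_i). -/
noncomputable section

/-- The ℓ_p norm on ℝ^m. -/
def pnorm (p : ℝ) {m : ℕ} (x : Fin m → ℝ) : ℝ :=
  (∑ i, |x i| ^ p) ^ (1 / p)

/-- The normalized duality map (J(x))_i = ‖x‖_p^{2-p} |x_i|^{p-1} sign(x_i). -/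
def Jmap (p : ℝ) {m : ℕ} (x : Fin m → ℝ) : Fin m → ℝ :=
  fun i => pnorm p x ^ (2 - p) * |x i| ^ (p - 1) * Real.sign (x i)

open Real Finset

namespace LpAux

variable {p : ℝ}

lemma sq_rpow (a q : ℝ) : (a ^ 2) ^ (q / 2) = |a| ^ q := by
  rw [← sq_abs, ← Real.rpow_natCast |a| 2, ← Real.rpow_mul (abs_nonneg a)]
  congr 1
  push_cast
  ring

lemma hasDerivAt_abs_rpow (hp : 2 ≤ p) (a : ℝ) :
    HasDerivAt (fun s : ℝ => |s| ^ p) (p * (a * |a| ^ (p - 2))) a := by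
  have h1 : HasDerivAt (fun s : ℝ => s ^ (2 : ℕ)) (↑(2:ℕ) * a ^ (2 - 1 : ℕ)) a := hasDerivAt_pow 2 a
  have h2 : HasDerivAt (fun v : ℝ => v ^ (p / 2)) (p / 2 * (a ^ (2:ℕ)) ^ (p / 2 - 1)) (a ^ (2:ℕ)) :=
    Real.hasDerivAt_rpow_const (Or.inr (by linarith))
  have h3 : HasDerivAt (fun s : ℝ => (s ^ (2:ℕ)) ^ (p / 2))
      (p / 2 * (a ^ (2:ℕ)) ^ (p / 2 - 1) * (↑(2:ℕ) * a ^ (2 - 1 : ℕ))) a :=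
    HasDerivAt.comp (h₂ := fun v : ℝ => v ^ (p / 2)) (h := fun s : ℝ => s ^ (2:ℕ)) a h2 h1
  rw [show (fun s : ℝ => (s ^ (2:ℕ)) ^ (p / 2)) = fun s : ℝ => |s| ^ p from
    funext fun s => sq_rpow s p] at h3
  convert h3 using 1
  rw [show p / 2 - 1 = (p - 2) / 2 by ring, sq_rpow]
  push_cast
  ring

lemma hasDerivAt_sp (hp : 2 < p) (a : ℝ) :
    HasDerivAt (fun s : ℝ => s * |s| ^ (p - 2)) ((p - 1) * |a| ^ (p - 2)) a := by
  rcases eq_or_ne a 0 with rfl | ha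
  · rw [abs_zero, Real.zero_rpow (by linarith : p - 2 ≠ 0), mul_zero]
    rw [hasDerivAt_iff_tendsto_slope]
    have hcont : Filter.Tendsto (fun s : ℝ => |s| ^ (p - 2)) (nhds 0) (nhds 0) := by
      have t1 : Filter.Tendsto (fun v : ℝ => v ^ (p - 2)) (nhds 0) (nhds 0) := by
        have h := Real.continuousAt_rpow_const 0 (p - 2) (Or.inr (by linarith : (0:ℝ) ≤ p - 2))
        rwa [ContinuousAt, Real.zero_rpow (by linarith : p - 2 ≠ 0)] at h
      have := t1.comp (continuous_abs.tendsto' 0 0 abs_zero)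
      exact this
    refine Filter.Tendsto.congr' ?_ (hcont.mono_left nhdsWithin_le_nhds)
    filter_upwards [self_mem_nhdsWithin] with s hs
    have hs' : (s : ℝ) ≠ 0 := hs
    rw [slope_def_field, zero_mul, sub_zero, sub_zero, mul_comm, mul_div_assoc,
      div_self hs', mul_one]
  · have ha2 : a ^ (2:ℕ) ≠ 0 := pow_ne_zero 2 ha
    have h1 : HasDerivAt (fun s : ℝ => s ^ (2 : ℕ)) (↑(2:ℕ) * a ^ (2 - 1 : ℕ)) a := hasDerivAt_pow 2 a
    have h2 : HasDerivAt (fun v : ℝ => v ^ ((p - 2) / 2))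
        ((p - 2) / 2 * (a ^ (2:ℕ)) ^ ((p - 2) / 2 - 1)) (a ^ (2:ℕ)) :=
      Real.hasDerivAt_rpow_const (Or.inl ha2)
    have habs : HasDerivAt (fun s : ℝ => (s ^ (2:ℕ)) ^ ((p - 2) / 2))
        ((p - 2) / 2 * (a ^ (2:ℕ)) ^ ((p - 2) / 2 - 1) * (↑(2:ℕ) * a ^ (2 - 1 : ℕ))) a :=
      HasDerivAt.comp (h₂ := fun v : ℝ => v ^ ((p - 2) / 2)) (h := fun s : ℝ => s ^ (2:ℕ)) a h2 h1
    rw [show (fun s : ℝ => (s ^ (2:ℕ)) ^ ((p - 2) / 2)) = fun s : ℝ => |s| ^ (p - 2) from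
      funext fun s => sq_rpow s (p - 2)] at habs
    rw [show (p - 2) / 2 - 1 = (p - 4) / 2 by ring, sq_rpow] at habs
    have hmul := (hasDerivAt_id a).mul habs
    simp only [id_eq] at hmul
    refine hmul.congr_deriv ?_
    have e2 : a ^ (2:ℕ) * |a| ^ (p - 4) = |a| ^ (p - 2) := by
      rw [← sq_abs, ← Real.rpow_natCast |a| 2, ← Real.rpow_add (abs_pos.mpr ha)]
      congr 1
      push_cast
      ring
    have e3 : (p - 1) * |a| ^ (p - 2) = 1 * |a| ^ (p - 2) + (p - 2) * (a ^ (2:ℕ) * |a| ^ (p - 4)) := by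
      rw [e2]; ring
    rw [e3]
    push_cast
    ring

lemma abs_mul_sign (a : ℝ) : |a| * Real.sign a = a := by
  rcases lt_trichotomy a 0 with h | rfl | h
  · rw [Real.sign_of_neg h, abs_of_neg h]; ring
  · simp [Real.sign_zero]
  · rw [Real.sign_of_pos h, abs_of_pos h]; ring

lemma abs_rpow_sign (hp : 2 ≤ p) (a : ℝ) :
    |a| ^ (p - 1) * Real.sign a = a * |a| ^ (p - 2) := by
  rcases eq_or_ne a 0 with rfl | ha
  · simp [Real.sign_zero, Real.zero_rpow (show p - 1 ≠ 0 by linarith)]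
  · rw [show p - 1 = 1 + (p - 2) by ring, Real.rpow_add (abs_pos.mpr ha), Real.rpow_one,
      mul_right_comm, abs_mul_sign]

lemma sp_mul_self (hp : 2 ≤ p) (a : ℝ) : a * |a| ^ (p - 2) * a = |a| ^ p := by
  rcases eq_or_ne a 0 with rfl | ha
  · simp [Real.zero_rpow (show p ≠ 0 by linarith)]
  · rw [show a * |a| ^ (p - 2) * a = a ^ (2:ℕ) * |a| ^ (p - 2) by ring, ← sq_abs,
      ← Real.rpow_natCast |a| 2, ← Real.rpow_add (abs_pos.mpr ha)]
    congr 1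
    push_cast
    ring

lemma sum_pos_of_ne_zero (hp : 0 < p) {m : ℕ} {u : Fin m → ℝ} (hu : u ≠ 0) :
    0 < ∑ i, |u i| ^ p := by
  obtain ⟨i, hi⟩ : ∃ i, u i ≠ 0 := by
    by_contra h; push_neg at h; exact hu (funext h)
  exact Finset.sum_pos' (fun j _ => Real.rpow_nonneg (abs_nonneg _) p)
    ⟨i, Finset.mem_univ i, Real.rpow_pos_of_pos (abs_pos.mpr hi) p⟩

lemma holder_S2 (hp : 2 < p) {m : ℕ} (u y : Fin m → ℝ) :
    ∑ i, |u i| ^ (p - 2) * (y i * y i) ≤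
      (∑ i, |u i| ^ p) ^ ((p - 2) / p) * (∑ i, |y i| ^ p) ^ (2 / p) := by
  have h2 : p - 2 ≠ 0 := by linarith
  have hpq : Real.HolderConjugate (p / (p - 2)) (p / 2) := by
    rw [Real.holderConjugate_iff]
    constructor
    · rw [lt_div_iff₀ (by linarith)]; linarith
    · have hp0 : p ≠ 0 := by linarith
      rw [inv_div, inv_div, ← add_div]
      rw [show p - 2 + 2 = p by ring, div_self hp0]
  have h := Real.inner_le_Lp_mul_Lq_of_nonneg (s := Finset.univ)
      (f := fun i => |u i| ^ (p - 2)) (g := fun i => y i * y i) hpq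
      (fun i _ => Real.rpow_nonneg (abs_nonneg _) _) (fun i _ => mul_self_nonneg _)
  have e1 : ∀ i : Fin m, ((|u i| ^ (p - 2)) ^ (p / (p - 2))) = |u i| ^ p := fun i => by
    rw [← Real.rpow_mul (abs_nonneg _)]
    congr 1
    rw [mul_comm, div_mul_cancel₀ _ h2]
  have e2 : ∀ i : Fin m, ((y i * y i) ^ (p / 2)) = |y i| ^ p := fun i => by
    rw [show y i * y i = y i ^ (2:ℕ) by ring, sq_rpow]
  simp only [e1, e2] at h
  rwa [one_div_div, one_div_div] at h


variable {m : ℕ}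

/-- `N(t) = ∑ |x i + t y i|^p`. -/
def nf (p : ℝ) (x y : Fin m → ℝ) : ℝ → ℝ := fun t => ∑ i, |x i + t * y i| ^ p

def Sf (p : ℝ) (x y : Fin m → ℝ) : ℝ → ℝ :=
  fun t => ∑ i, (x i + t * y i) * |x i + t * y i| ^ (p - 2) * y i

def S2f (p : ℝ) (x y : Fin m → ℝ) : ℝ → ℝ :=
  fun t => ∑ i, |x i + t * y i| ^ (p - 2) * (y i * y i)

def Df (p : ℝ) (x y : Fin m → ℝ) : ℝ → ℝ :=
  fun t => 2 * (nf p x y t ^ ((2 - p) / p) * Sf p x y t)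

def D'f (p : ℝ) (x y : Fin m → ℝ) : ℝ → ℝ := fun t =>
  2 * ((p * Sf p x y t * ((2 - p) / p) * nf p x y t ^ ((2 - p) / p - 1)) * Sf p x y t
    + nf p x y t ^ ((2 - p) / p) * ((p - 1) * S2f p x y t))

lemma haff (x y : Fin m → ℝ) (i : Fin m) (t : ℝ) :
    HasDerivAt (fun t : ℝ => x i + t * y i) (y i) t := by
  simpa using ((hasDerivAt_id t).mul_const (y i)).const_add (x i)

lemma nf_hasDeriv (hp : 2 ≤ p) (x y : Fin m → ℝ) (t : ℝ) :
    HasDerivAt (nf p x y) (p * Sf p x y t) t := by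
  have h := HasDerivAt.fun_sum (x := t) (u := Finset.univ)
    (A := fun (i : Fin m) (t : ℝ) => |x i + t * y i| ^ p)
    (A' := fun i => p * ((x i + t * y i) * |x i + t * y i| ^ (p - 2)) * y i)
    (fun i _ => by
      have hcomp := HasDerivAt.comp (h₂ := fun s : ℝ => |s| ^ p)
        (h := fun t : ℝ => x i + t * y i) t (hasDerivAt_abs_rpow hp (x i + t * y i)) (haff x y i t)
      exact hcomp)
  have he : p * Sf p x y t = ∑ i : Fin m, p * ((x i + t * y i) * |x i + t * y i| ^ (p - 2)) * y i := by
    unfold Sf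
    rw [Finset.mul_sum]
    exact Finset.sum_congr rfl fun i _ => by ring
  unfold nf
  rw [he]
  exact h

lemma Sf_hasDeriv (hp : 2 < p) (x y : Fin m → ℝ) (t : ℝ) :
    HasDerivAt (Sf p x y) ((p - 1) * S2f p x y t) t := by
  have h := HasDerivAt.fun_sum (x := t) (u := Finset.univ)
    (A := fun (i : Fin m) (t : ℝ) => (x i + t * y i) * |x i + t * y i| ^ (p - 2) * y i)
    (A' := fun i => (p - 1) * |x i + t * y i| ^ (p - 2) * y i * y i)
    (fun i _ => by
      have hcomp := HasDerivAt.comp (h₂ := fun s : ℝ => s * |s| ^ (p - 2))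
        (h := fun t : ℝ => x i + t * y i) t (hasDerivAt_sp hp (x i + t * y i)) (haff x y i t)
      exact hcomp.mul_const (y i))
  have he : (p - 1) * S2f p x y t
      = ∑ i : Fin m, (p - 1) * |x i + t * y i| ^ (p - 2) * y i * y i := by
    unfold S2f
    rw [Finset.mul_sum]
    exact Finset.sum_congr rfl fun i _ => by ring
  unfold Sf
  rw [he]
  exact h

lemma nf_pos (hp0 : 0 < p) {x y : Fin m → ℝ} (hxy : ∀ t : ℝ, x + t • y ≠ 0) (t : ℝ) :
    0 < nf p x y t := by
  have h := sum_pos_of_ne_zero hp0 (hxy t)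
  simp only [Pi.add_apply, Pi.smul_apply, smul_eq_mul] at h
  exact h

lemma phi_hasDeriv (hp2 : 2 < p) {x y : Fin m → ℝ} (hxy : ∀ t : ℝ, x + t • y ≠ 0) (t : ℝ) :
    HasDerivAt (fun t => nf p x y t ^ (2 / p)) (Df p x y t) t := by
  have hp0 : (0:ℝ) < p := by linarith
  have h := (nf_hasDeriv hp2.le x y t).rpow_const (p := 2 / p) (Or.inl (nf_pos hp0 hxy t).ne')
  convert h using 1
  unfold Df
  have he : 2 / p - 1 = (2 - p) / p := by field_simp
  rw [he]
  field_simp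

lemma Df_hasDeriv (hp2 : 2 < p) {x y : Fin m → ℝ} (hxy : ∀ t : ℝ, x + t • y ≠ 0) (t : ℝ) :
    HasDerivAt (Df p x y) (D'f p x y t) t := by
  have hp0 : (0:ℝ) < p := by linarith
  have hA := (nf_hasDeriv hp2.le x y t).rpow_const (p := (2 - p) / p)
    (Or.inl (nf_pos hp0 hxy t).ne')
  have h := HasDerivAt.const_mul 2 (hA.mul (Sf_hasDeriv hp2 x y t))
  exact h

lemma D'f_le (hp2 : 2 < p) {x y : Fin m → ℝ} (hxy : ∀ t : ℝ, x + t • y ≠ 0) (t : ℝ) :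
    D'f p x y t ≤ 2 * (p - 1) * (∑ i, |y i| ^ p) ^ (2 / p) := by
  have hp0 : (0:ℝ) < p := by linarith
  have hn := nf_pos hp0 hxy t
  set N := nf p x y t with hN
  set S := Sf p x y t with hSv
  set ny2 : ℝ := (∑ i, |y i| ^ p) ^ (2 / p) with hny2
  have hE : (0:ℝ) ≤ N ^ ((2 - p) / p - 1) := Real.rpow_nonneg hn.le _
  have term1 : p * S * ((2 - p) / p) * N ^ ((2 - p) / p - 1) * S ≤ 0 := by
    have he : p * S * ((2 - p) / p) * N ^ ((2 - p) / p - 1) * S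
        = (2 - p) * (S ^ 2 * N ^ ((2 - p) / p - 1)) := by
      field_simp
    rw [he]
    apply mul_nonpos_of_nonpos_of_nonneg (by linarith)
    positivity
  have term2 : N ^ ((2 - p) / p) * ((p - 1) * S2f p x y t) ≤ (p - 1) * ny2 := by
    have hhold : S2f p x y t ≤ N ^ ((p - 2) / p) * (∑ i, |y i| ^ p) ^ (2 / p) := by
      have h := holder_S2 hp2 (fun i => x i + t * y i) y
      rw [hN]
      unfold S2f nf
      simpa using h
    have h1 : N ^ ((2 - p) / p) * ((p - 1) * S2f p x y t)
        ≤ N ^ ((2 - p) / p) * ((p - 1) * (N ^ ((p - 2) / p) * ny2)) := by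
      apply mul_le_mul_of_nonneg_left _ (Real.rpow_nonneg hn.le _)
      apply mul_le_mul_of_nonneg_left _ (by linarith : (0:ℝ) ≤ p - 1)
      rw [hny2]
      exact hhold
    have h2 : N ^ ((2 - p) / p) * ((p - 1) * (N ^ ((p - 2) / p) * ny2)) = (p - 1) * ny2 := by
      have : N ^ ((2 - p) / p) * N ^ ((p - 2) / p) = 1 := by
        rw [← Real.rpow_add hn]
        rw [show (2 - p) / p + (p - 2) / p = 0 by field_simp; ring]
        exact Real.rpow_zero N
      calc N ^ ((2 - p) / p) * ((p - 1) * (N ^ ((p - 2) / p) * ny2))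
          = (N ^ ((2 - p) / p) * N ^ ((p - 2) / p)) * ((p - 1) * ny2) := by ring
        _ = (p - 1) * ny2 := by rw [this, one_mul]
    linarith
  have hs2 : 0 ≤ S2f p x y t := Finset.sum_nonneg fun i _ =>
    mul_nonneg (Real.rpow_nonneg (abs_nonneg _) _) (mul_self_nonneg _)
  unfold D'f
  have : 2 * (p - 1) * ny2 = 2 * (0 + (p - 1) * ny2) := by ring
  rw [hny2] at *
  nlinarith [term1, term2]


lemma pnorm_rpow (hp0 : 0 < p) (v : Fin m → ℝ) (q : ℝ) :
    pnorm p v ^ q = (∑ i, |v i| ^ p) ^ (q / p) := by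
  simp only [pnorm]
  rw [← Real.rpow_mul (Finset.sum_nonneg fun i _ => Real.rpow_nonneg (abs_nonneg _) p)]
  congr 1
  field_simp

lemma abs_rpow_two (a : ℝ) : |a| ^ (2:ℝ) = a ^ (2:ℕ) := by
  rw [show (2:ℝ) = ((2:ℕ):ℝ) by norm_num, Real.rpow_natCast, sq_abs]

lemma key (hp2 : 2 < p) (x y : Fin m → ℝ) (hxy : ∀ t : ℝ, x + t • y ≠ 0) :
    nf p x y 1 ^ (2 / p) ≤
      nf p x y 0 ^ (2 / p) + Df p x y 0 + (p - 1) * (∑ i, |y i| ^ p) ^ (2 / p) := by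
  have hp0 : (0:ℝ) < p := by linarith
  set ny2 : ℝ := (∑ i, |y i| ^ p) ^ (2 / p) with hny2
  set g : ℝ → ℝ := fun t => Df p x y 0 + 2 * (p - 1) * ny2 * t - Df p x y t with hg
  have hg_deriv : ∀ t, HasDerivAt g (2 * (p - 1) * ny2 - D'f p x y t) t := by
    intro t
    have h1 : HasDerivAt (fun t : ℝ => Df p x y 0 + 2 * (p - 1) * ny2 * t)
        (2 * (p - 1) * ny2) t := by
      simpa using ((hasDerivAt_id t).const_mul (2 * (p - 1) * ny2)).const_add (Df p x y 0)
    exact h1.sub (Df_hasDeriv hp2 hxy t)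
  have hmono : Monotone g :=
    monotone_of_deriv_nonneg (fun t => (hg_deriv t).differentiableAt)
      (fun t => by
        rw [(hg_deriv t).deriv]
        have h := D'f_le hp2 hxy t
        rw [← hny2] at h
        linarith)
  have hg0 : g 0 = 0 := by simp [hg]
  have hge : ∀ t : ℝ, 0 ≤ t → 0 ≤ g t := fun t ht => by
    have h := hmono ht
    rw [hg0] at h
    exact h
  set ψ : ℝ → ℝ := fun t => nf p x y 0 ^ (2 / p) + Df p x y 0 * t + (p - 1) * ny2 * (t * t)
      - nf p x y t ^ (2 / p) with hψ
  have hψ_deriv : ∀ t, HasDerivAt ψ (g t) t := by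
    intro t
    have c1 : HasDerivAt (fun t : ℝ => nf p x y 0 ^ (2 / p) + Df p x y 0 * t)
        (Df p x y 0) t := by
      simpa using ((hasDerivAt_id t).const_mul (Df p x y 0)).const_add (nf p x y 0 ^ (2 / p))
    have c2 : HasDerivAt (fun t : ℝ => (p - 1) * ny2 * (t * t))
        ((p - 1) * ny2 * (1 * t + t * 1)) t :=
      ((hasDerivAt_id t).mul (hasDerivAt_id t)).const_mul ((p - 1) * ny2)
    have c3 := phi_hasDeriv hp2 hxy t
    have hc := (c1.add c2).sub c3
    refine hc.congr_deriv ?_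
    rw [hg]
    ring
  have hψmono : MonotoneOn ψ (Set.Icc (0:ℝ) 1) := by
    apply monotoneOn_of_deriv_nonneg (convex_Icc 0 1)
    · exact fun t _ => ((hψ_deriv t).differentiableAt).continuousAt.continuousWithinAt
    · exact fun t _ => ((hψ_deriv t).differentiableAt).differentiableWithinAt
    · intro t ht
      rw [(hψ_deriv t).deriv]
      rw [interior_Icc] at ht
      exact hge t ht.1.le
  have hfin := hψmono (Set.mem_Icc.mpr ⟨le_refl 0, zero_le_one⟩)
    (Set.mem_Icc.mpr ⟨zero_le_one, le_refl 1⟩) zero_le_one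
  rw [hψ] at hfin
  simp only at hfin
  norm_num at hfin
  linarith

lemma parallel_case (hp : 2 ≤ p) (c : ℝ) (y : Fin m → ℝ) (hy : y ≠ 0) :
    pnorm p (c • y + y) ^ (2:ℝ) ≤
      pnorm p (c • y) ^ (2:ℝ) + 2 * (∑ i, Jmap p (c • y) i * y i)
        + (p - 1) * pnorm p y ^ (2:ℝ) := by
  have hp0 : (0:ℝ) < p := by linarith
  have hp0' : p ≠ 0 := by linarith
  have hAp : 0 < ∑ i, |y i| ^ p := sum_pos_of_ne_zero hp0 hy
  have hA : 0 < pnorm p y := by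
    rw [pnorm]; exact Real.rpow_pos_of_pos hAp _
  have hsmul : ∀ d : ℝ, pnorm p (d • y) = |d| * pnorm p y := by
    intro d
    simp only [pnorm]
    have he : ∀ i : Fin m, |(d • y) i| ^ p = |d| ^ p * |y i| ^ p := fun i => by
      rw [Pi.smul_apply, smul_eq_mul, abs_mul, Real.mul_rpow (abs_nonneg _) (abs_nonneg _)]
    rw [Finset.sum_congr rfl fun i _ => he i, ← Finset.mul_sum,
      Real.mul_rpow (Real.rpow_nonneg (abs_nonneg d) p)
        (Finset.sum_nonneg fun i _ => Real.rpow_nonneg (abs_nonneg _) p),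
      ← Real.rpow_mul (abs_nonneg d), mul_one_div_cancel hp0', Real.rpow_one]
  have hadd : c • y + y = (c + 1) • y := by
    funext i
    simp only [Pi.add_apply, Pi.smul_apply, smul_eq_mul]
    ring
  have hyp : pnorm p y ^ (p:ℝ) = ∑ i, |y i| ^ p := by
    rw [pnorm_rpow hp0, div_self hp0', Real.rpow_one]
  have hJ : ∑ i, Jmap p (c • y) i * y i = c * pnorm p y ^ (2:ℝ) := by
    rcases eq_or_ne c 0 with rfl | hc
    · simp [Jmap, Real.sign_zero]
    · have he : ∀ i : Fin m, Jmap p (c • y) i * y i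
          = pnorm p (c • y) ^ (2 - p) * ((c • y) i * |(c • y) i| ^ (p - 2) * y i) := fun i => by
        simp only [Jmap]
        rw [mul_assoc (pnorm p (c • y) ^ (2 - p)), abs_rpow_sign hp]
        ring
      rw [Finset.sum_congr rfl fun i _ => he i, ← Finset.mul_sum]
      have he2 : ∀ i : Fin m, (c • y) i * |(c • y) i| ^ (p - 2) * y i
          = c * |c| ^ (p - 2) * (y i * |y i| ^ (p - 2) * y i) := fun i => by
        rw [Pi.smul_apply, smul_eq_mul, abs_mul,
          Real.mul_rpow (abs_nonneg c) (abs_nonneg (y i))]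
        ring
      rw [Finset.sum_congr rfl fun i _ => he2 i, ← Finset.mul_sum,
        Finset.sum_congr rfl fun i _ => sp_mul_self hp (y i)]
      rw [hsmul c, Real.mul_rpow (abs_nonneg c) hA.le]
      rw [← hyp]
      have hcc : |c| ^ (2 - p) * (c * |c| ^ (p - 2)) = c := by
        rw [show |c| ^ (2 - p) * (c * |c| ^ (p - 2)) = c * (|c| ^ (2 - p) * |c| ^ (p - 2)) by ring,
          ← Real.rpow_add (abs_pos.mpr hc), show (2 - p) + (p - 2) = 0 by ring, Real.rpow_zero,
          mul_one]
      calc |c| ^ (2 - p) * pnorm p y ^ (2 - p) * (c * |c| ^ (p - 2) * pnorm p y ^ (p:ℝ))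
          = |c| ^ (2 - p) * (c * |c| ^ (p - 2)) * (pnorm p y ^ (2 - p) * pnorm p y ^ (p:ℝ)) := by
            ring
        _ = c * pnorm p y ^ (2:ℝ) := by
            rw [hcc, ← Real.rpow_add hA, show (2 - p) + p = (2:ℝ) by ring]
  rw [hadd, hJ, hsmul (c + 1), hsmul c,
    Real.mul_rpow (abs_nonneg (c + 1)) hA.le, Real.mul_rpow (abs_nonneg c) hA.le,
    abs_rpow_two, abs_rpow_two]
  have hA2 : (0:ℝ) ≤ pnorm p y ^ (2:ℝ) := Real.rpow_nonneg hA.le _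
  nlinarith [hA2, mul_nonneg (by linarith : (0:ℝ) ≤ p - 2) hA2]

end LpAux


open LpAux

/-- for p ≥ 2, ‖x+y‖_p² ≤ ‖x‖_p² + 2⟨J(x), y⟩ + (p-1)‖y‖_p². -/
theorem lp_two_uniform_smoothness (p : ℝ) (hp : 2 ≤ p) (m : ℕ) (x y : Fin m → ℝ) :
    pnorm p (x + y) ^ (2 : ℝ) ≤
      pnorm p x ^ (2 : ℝ) + 2 * (∑ i, Jmap p x i * y i) + (p - 1) * pnorm p y ^ (2 : ℝ) := by
  rcases eq_or_lt_of_le hp with hp2 | hp2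
  · -- p = 2
    subst hp2
    have hsq : ∀ v : Fin m → ℝ, pnorm 2 v ^ (2:ℝ) = ∑ i, v i ^ (2:ℕ) := by
      intro v
      simp only [pnorm]
      rw [Finset.sum_congr rfl fun i (_ : i ∈ Finset.univ) => LpAux.abs_rpow_two (v i)]
      rw [← Real.rpow_mul (Finset.sum_nonneg fun i _ => sq_nonneg (v i))]
      norm_num
    have hJ : ∀ i, Jmap 2 x i = x i := fun i => by
      simp only [Jmap, show (2:ℝ) - 2 = 0 by norm_num, show (2:ℝ) - 1 = 1 by norm_num,
        Real.rpow_zero, Real.rpow_one, one_mul]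
      exact LpAux.abs_mul_sign (x i)
    rw [hsq, hsq, hsq]
    simp only [hJ, Pi.add_apply]
    have expand : ∑ i, (x i + y i) ^ (2:ℕ)
        = ∑ i, x i ^ (2:ℕ) + (2 * ∑ i, x i * y i + ∑ i, y i ^ (2:ℕ)) := by
      rw [Finset.mul_sum, ← Finset.sum_add_distrib, ← Finset.sum_add_distrib]
      exact Finset.sum_congr rfl fun i _ => by ring
    rw [expand]
    have h21 : (2:ℝ) - 1 = 1 := by norm_num
    rw [h21, one_mul]
    linarith
  · by_cases hy : y = 0
    · subst hy
      have hzero : pnorm p (0 : Fin m → ℝ) = 0 := by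
        simp only [pnorm, Pi.zero_apply, abs_zero]
        rw [Real.zero_rpow (show p ≠ 0 by linarith), Finset.sum_const_zero,
          Real.zero_rpow (show 1 / p ≠ 0 by positivity)]
      rw [add_zero, hzero, Real.zero_rpow (show (2:ℝ) ≠ 0 by norm_num)]
      simp only [Pi.zero_apply, mul_zero, Finset.sum_const_zero, add_zero]
      norm_num
    · by_cases hpar : ∃ c : ℝ, x = c • y
      · obtain ⟨c, rfl⟩ := hpar
        exact LpAux.parallel_case hp c y hy
      · push_neg at hpar
        have hxy : ∀ t : ℝ, x + t • y ≠ 0 := by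
          intro t h0
          apply hpar (-t)
          funext i
          have h := congrFun h0 i
          simp only [Pi.add_apply, Pi.smul_apply, smul_eq_mul, Pi.zero_apply] at h
          simp only [Pi.smul_apply, smul_eq_mul]
          linarith
        have hk := LpAux.key hp2 x y hxy
        have hp0 : (0:ℝ) < p := by linarith
        have e1 : pnorm p (x + y) ^ (2:ℝ) = nf p x y 1 ^ (2/p) := by
          rw [LpAux.pnorm_rpow hp0]
          unfold LpAux.nf
          congr 1
          exact Finset.sum_congr rfl fun i _ => by simp
        have e0 : pnorm p x ^ (2:ℝ) = nf p x y 0 ^ (2/p) := by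
          rw [LpAux.pnorm_rpow hp0]
          unfold LpAux.nf
          congr 1
          exact Finset.sum_congr rfl fun i _ => by simp
        have eY : pnorm p y ^ (2:ℝ) = (∑ i, |y i| ^ p) ^ (2/p) := LpAux.pnorm_rpow hp0 y 2
        have eJ : 2 * (∑ i, Jmap p x i * y i) = Df p x y 0 := by
          have he : ∀ i : Fin m, Jmap p x i * y i
              = pnorm p x ^ (2 - p) * (x i * |x i| ^ (p - 2) * y i) := fun i => by
            simp only [Jmap]
            rw [mul_assoc (pnorm p x ^ (2 - p)), LpAux.abs_rpow_sign hp]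
            ring
          rw [Finset.sum_congr rfl fun i (_ : i ∈ Finset.univ) => he i, ← Finset.mul_sum]
          have hnf0 : nf p x y 0 = ∑ i, |x i| ^ p := by
            unfold LpAux.nf; exact Finset.sum_congr rfl fun i _ => by simp
          have hSf0 : Sf p x y 0 = ∑ i, x i * |x i| ^ (p - 2) * y i := by
            unfold LpAux.Sf; exact Finset.sum_congr rfl fun i _ => by simp
          unfold LpAux.Df
          rw [hnf0, hSf0, LpAux.pnorm_rpow hp0]
        rw [e1, e0, eY, eJ]
        exact hk

end
end

section
/- Let ω ∈ [θ,1]^N, θ ∈ (0,1), and suppose A ∈ ℂ^{m×N} satisfies the weighted robust null space property ω-RNSP_{p,q} of order s with constants ρ ∈ (0,1), γ > 0, for p, q ∈ [1,∞]. Then for any 1 ≤ r ≤ q, any x ∈ ℂ^N, and any minimizer x̂ of min_z ‖z‖_{ω,1} subject to ‖Az − y‖_p ≤ ε (with ‖Ax − y‖_p ≤ ε), one has ‖x̂ − x‖_r ≤ A'·s^{1/r−1/q}·ε + B'·s^{1/r−1}·σ_s(x)_{ω,1}, where A', B' depend only on ρ, γ, θ. -/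
noncomputable section

open scoped ENNReal

/-- The ℓ_p norm of a complex vector for p ∈ [1,∞] (extended exponent). -/
def cnormE (p : ℝ≥0∞) {n : ℕ} (x : Fin n → ℂ) : ℝ :=
  if p = ⊤ then ⨆ i, ‖x i‖
  else (∑ i, ‖x i‖ ^ p.toReal) ^ (1 / p.toReal)

/-- The weighted ℓ_1 norm ‖x‖_{ω,1} = ∑ i, ω i * |x i|. -/
def wnorm {n : ℕ} (ω : Fin n → ℝ) (x : Fin n → ℂ) : ℝ :=
  ∑ i, ω i * ‖x i‖

/-- Restriction of x to an index set S (zero outside S). -/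
def restrict {n : ℕ} (S : Finset (Fin n)) (x : Fin n → ℂ) : Fin n → ℂ :=
  fun i => if i ∈ S then x i else 0

/-- x is s-sparse. -/
def CSparse {n : ℕ} (s : ℕ) (x : Fin n → ℂ) : Prop :=
  (Finset.univ.filter fun i => x i ≠ 0).card ≤ s

/-- Best weighted s-term approximation error σ_s(x)_{ω,1}. -/
def sigmaS {n : ℕ} (s : ℕ) (ω : Fin n → ℝ) (x : Fin n → ℂ) : ℝ :=
  sInf {t | ∃ z : Fin n → ℂ, CSparse s z ∧ t = wnorm ω (x - z)}

/-- A satisfies the weighted robust null space property ω-RNSP_{p,q} of order s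
with constants ρ and γ. -/
def wRNSP {m N : ℕ} (p q : ℝ≥0∞) (ω : Fin N → ℝ) (s : ℕ) (ρ γ : ℝ)
    (A : Matrix (Fin m) (Fin N) ℂ) : Prop :=
  ∀ (v : Fin N → ℂ) (S : Finset (Fin N)), S.card ≤ s →
    cnormE q (restrict S v) ≤
      ρ / (s : ℝ) ^ (1 - (1 / q).toReal) * wnorm ω (restrict Sᶜ v) +
        γ * cnormE p (A.mulVec v)

section Helpers

variable {n : ℕ}

lemma cnormE_nonneg (p : ℝ≥0∞) (x : Fin n → ℂ) : 0 ≤ cnormE p x := by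
  unfold cnormE
  split
  · exact Real.iSup_nonneg fun i => norm_nonneg _
  · exact Real.rpow_nonneg
      (Finset.sum_nonneg fun i _ => Real.rpow_nonneg (norm_nonneg _) _) _

lemma cnormE_of_ne_top {p : ℝ≥0∞} (hp : p ≠ ⊤) (x : Fin n → ℂ) :
    cnormE p x = (∑ i, ‖x i‖ ^ p.toReal) ^ (1 / p.toReal) := by
  unfold cnormE; rw [if_neg hp]

lemma one_le_toReal' {p : ℝ≥0∞} (h1 : 1 ≤ p) (h2 : p ≠ ⊤) : 1 ≤ p.toReal := by
  rw [← ENNReal.toReal_one]; exact ENNReal.toReal_mono h2 h1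

lemma abs_restrict (S : Finset (Fin n)) (x : Fin n → ℂ) (i : Fin n) :
    ‖restrict S x i‖ = if i ∈ S then ‖x i‖ else 0 := by
  unfold restrict; split <;> simp

lemma wnorm_restrict (ω : Fin n → ℝ) (S : Finset (Fin n)) (x : Fin n → ℂ) :
    wnorm ω (restrict S x) = ∑ i ∈ S, ω i * ‖x i‖ := by
  unfold wnorm
  rw [show (∑ i, ω i * ‖restrict S x i‖)
      = ∑ i, (if i ∈ S then ω i * ‖x i‖ else 0) from
    Finset.sum_congr rfl fun i _ => by rw [abs_restrict]; split <;> simp,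
    Finset.sum_ite_mem, Finset.univ_inter]

lemma cnormE_restrict_of_ne_top {p : ℝ≥0∞} (hp : p ≠ ⊤) (hpt : 0 < p.toReal)
    (S : Finset (Fin n)) (x : Fin n → ℂ) :
    cnormE p (restrict S x) = (∑ i ∈ S, ‖x i‖ ^ p.toReal) ^ (1 / p.toReal) := by
  rw [cnormE_of_ne_top hp]
  congr 1
  rw [show (∑ i, ‖restrict S x i‖ ^ p.toReal)
      = ∑ i, (if i ∈ S then ‖x i‖ ^ p.toReal else 0) from
    Finset.sum_congr rfl fun i _ => by
      rw [abs_restrict]; split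
      · rfl
      · exact Real.zero_rpow hpt.ne',
    Finset.sum_ite_mem, Finset.univ_inter]

lemma abs_le_cnormE_top (x : Fin n → ℂ) (i : Fin n) :
    ‖x i‖ ≤ cnormE ⊤ x := by
  unfold cnormE; rw [if_pos rfl]
  exact le_ciSup (f := fun j => ‖x j‖) (Finite.bddAbove_range _) i

lemma abs_le_cnormE_top_restrict (S : Finset (Fin n)) (x : Fin n → ℂ) {i : Fin n}
    (hi : i ∈ S) : ‖x i‖ ≤ cnormE ⊤ (restrict S x) := by
  have := abs_le_cnormE_top (restrict S x) i
  rwa [abs_restrict, if_pos hi] at this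

lemma cnormE_neg (p : ℝ≥0∞) (x : Fin n → ℂ) : cnormE p (-x) = cnormE p x := by
  unfold cnormE
  simp [Pi.neg_apply, norm_neg]

lemma cnormE_add_le {p : ℝ≥0∞} (hp : 1 ≤ p) (u w : Fin n → ℂ) :
    cnormE p (u + w) ≤ cnormE p u + cnormE p w := by
  by_cases htop : p = ⊤
  · subst htop
    unfold cnormE
    rw [if_pos rfl, if_pos rfl, if_pos rfl]
    cases isEmpty_or_nonempty (Fin n) with
    | inl h => simp [Real.iSup_of_isEmpty]
    | inr h =>
      refine ciSup_le fun i => ?_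
      calc ‖(u + w) i‖ ≤ ‖u i‖ + ‖w i‖ := by
            simpa using norm_add_le (u i) (w i)
        _ ≤ _ := add_le_add
            (le_ciSup (f := fun j => ‖u j‖) (Finite.bddAbove_range _) i)
            (le_ciSup (f := fun j => ‖w j‖) (Finite.bddAbove_range _) i)
  · have hpt : 1 ≤ p.toReal := one_le_toReal' hp htop
    rw [cnormE_of_ne_top htop, cnormE_of_ne_top htop, cnormE_of_ne_top htop]
    calc (∑ i, ‖(u + w) i‖ ^ p.toReal) ^ (1 / p.toReal)
        ≤ (∑ i, (‖u i‖ + ‖w i‖) ^ p.toReal) ^ (1 / p.toReal) := by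
          refine Real.rpow_le_rpow (Finset.sum_nonneg fun i _ =>
            Real.rpow_nonneg (norm_nonneg _) _)
            (Finset.sum_le_sum fun i _ => Real.rpow_le_rpow (norm_nonneg _)
              (by simpa using norm_add_le (u i) (w i)) (by linarith)) (by positivity)
      _ ≤ _ := Real.Lp_add_le_of_nonneg (s := Finset.univ)
          (f := fun i => ‖u i‖) (g := fun i => ‖w i‖) hpt
          (fun i _ => norm_nonneg _) (fun i _ => norm_nonneg _)

lemma rpow_sum_le (S : Finset (Fin n)) (a : Fin n → ℝ) (ha : ∀ i, 0 ≤ a i)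
    {r q : ℝ} (hr : 1 ≤ r) (hrq : r ≤ q) :
    (∑ i ∈ S, a i ^ r) ^ (1 / r) ≤
      (S.card : ℝ) ^ (1 / r - 1 / q) * (∑ i ∈ S, a i ^ q) ^ (1 / q) := by
  rcases eq_or_lt_of_le hrq with h | h
  · subst h; simp
  · have hr0 : 0 < r := by linarith
    have hq0 : 0 < q := by linarith
    have hconj : (q / r).HolderConjugate (q / (q - r)) := by
      constructor
      · rw [inv_div, inv_div, inv_one, ← add_div, add_sub_cancel]
        exact div_self hq0.ne'
      · exact div_pos hq0 hr0
      · exact div_pos hq0 (by linarith)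
    have H := Real.inner_le_Lp_mul_Lq_of_nonneg (s := S) (f := fun i => a i ^ r)
      (g := fun _ => (1 : ℝ)) hconj (fun i _ => Real.rpow_nonneg (ha i) _)
      (fun i _ => zero_le_one)
    simp only [mul_one, Real.one_rpow, Finset.sum_const, nsmul_eq_mul] at H
    have h1 : ∀ i, (a i ^ r) ^ (q / r) = a i ^ q := fun i => by
      rw [← Real.rpow_mul (ha i), mul_div_cancel₀ _ hr0.ne']
    rw [show (∑ i ∈ S, (a i ^ r) ^ (q / r)) = ∑ i ∈ S, a i ^ q from
      Finset.sum_congr rfl fun i _ => h1 i] at H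
    have h2 : (1 : ℝ) / (q / r) = r / q := one_div_div q r
    have h3 : (1 : ℝ) / (q / (q - r)) = (q - r) / q := one_div_div q (q - r)
    rw [h2, h3] at H
    -- H : ∑ a^r ≤ (∑ a^q)^(r/q) * card^((q-r)/q)
    have hL0 : 0 ≤ ∑ i ∈ S, a i ^ r :=
      Finset.sum_nonneg fun i _ => Real.rpow_nonneg (ha i) _
    have hQ0 : 0 ≤ ∑ i ∈ S, a i ^ q :=
      Finset.sum_nonneg fun i _ => Real.rpow_nonneg (ha i) _
    have hc0 : (0:ℝ) ≤ (S.card : ℝ) := Nat.cast_nonneg _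
    have := Real.rpow_le_rpow hL0 H (le_of_lt (by positivity : (0:ℝ) < 1 / r))
    calc (∑ i ∈ S, a i ^ r) ^ (1 / r)
        ≤ ((∑ i ∈ S, a i ^ q) ^ (r / q) * (S.card : ℝ) ^ ((q - r) / q)) ^ (1 / r) := this
      _ = (S.card : ℝ) ^ (1 / r - 1 / q) * (∑ i ∈ S, a i ^ q) ^ (1 / q) := by
          rw [Real.mul_rpow (Real.rpow_nonneg hQ0 _) (Real.rpow_nonneg hc0 _),
            ← Real.rpow_mul hQ0, ← Real.rpow_mul hc0]
          rw [show r / q * (1 / r) = 1 / q by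
              field_simp,
            show (q - r) / q * (1 / r) = 1 / r - 1 / q by
              rw [div_mul_div_comm, div_sub_div _ _ hr0.ne' hq0.ne']
              ring_nf]
          ring

lemma exists_maxset {k : ℕ} (hk : k ≤ n) (a : Fin n → ℝ) :
    ∃ T : Finset (Fin n), T.card = k ∧ ∀ i ∈ T, ∀ j, j ∉ T → a j ≤ a i := by
  have hne : (Finset.powersetCard k (Finset.univ : Finset (Fin n))).Nonempty :=
    Finset.powersetCard_nonempty.mpr (by simpa using hk)
  obtain ⟨T, hT, hmax⟩ := Finset.exists_max_image _ (fun T => ∑ i ∈ T, a i) hne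
  rw [Finset.mem_powersetCard_univ] at hT
  refine ⟨T, hT, ?_⟩
  intro i hi j hj
  by_contra hlt
  push_neg at hlt
  have hji : j ∉ T.erase i := fun h => hj (Finset.erase_subset _ _ h)
  have hT'card : (insert j (T.erase i)).card = k := by
    have hpos : 0 < T.card := Finset.card_pos.mpr ⟨i, hi⟩
    rw [Finset.card_insert_of_notMem hji, Finset.card_erase_of_mem hi]
    omega
  have hsum := hmax _ (Finset.mem_powersetCard_univ.mpr hT'card)
  rw [Finset.sum_insert hji] at hsum
  have herase : ∑ x ∈ T.erase i, a x + a i = ∑ x ∈ T, a x := Finset.sum_erase_add T a hi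
  linarith

end Helpers

set_option maxHeartbeats 2000000 in
/-- stable and robust recovery for ω-BPDQ_p under ω-RNSP_{p,q},
for all 1 ≤ r ≤ q, with p, q ∈ [1,∞]. -/
theorem wBPDQ_recovery_RNSP (θ ρ γ : ℝ) (hθ : θ ∈ Set.Ioo (0:ℝ) 1)
    (hρ : ρ ∈ Set.Ioo (0:ℝ) 1) (hγ : 0 < γ) :
    ∃ A' B' : ℝ, ∀ (p q : ℝ≥0∞), 1 ≤ p → 1 ≤ q → ∀ (s : ℕ), 2 ≤ s →
      ∀ (m N : ℕ) (A : Matrix (Fin m) (Fin N) ℂ) (ω : Fin N → ℝ),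
        (∀ i, ω i ∈ Set.Icc θ 1) → wRNSP p q ω s ρ γ A →
      ∀ (r : ℝ≥0∞), 1 ≤ r → r ≤ q →
      ∀ (x xhat : Fin N → ℂ) (y : Fin m → ℂ) (ε : ℝ), 0 ≤ ε →
        cnormE p (A.mulVec x - y) ≤ ε →
        cnormE p (A.mulVec xhat - y) ≤ ε →
        (∀ z : Fin N → ℂ, cnormE p (A.mulVec z - y) ≤ ε → wnorm ω xhat ≤ wnorm ω z) →
        cnormE r (xhat - x) ≤
          A' * (s : ℝ) ^ ((1 / r).toReal - (1 / q).toReal) * ε +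
            B' * (s : ℝ) ^ ((1 / r).toReal - 1) * sigmaS s ω x := by
  obtain ⟨hθ0, hθ1⟩ := hθ
  obtain ⟨hρ0, hρ1⟩ := hρ
  have h1ρ : 0 < 1 - ρ := by linarith
  refine ⟨4*(2*γ/(1-ρ))/θ + 2*γ, 2*(2*(1+ρ)/(1-ρ))/θ, ?_⟩
  set D1 : ℝ := 2*γ/(1-ρ) with hD1def
  set D2 : ℝ := 2*(1+ρ)/(1-ρ) with hD2def
  have hD1pos : 0 < D1 := by rw [hD1def]; positivity
  have hD2pos : 0 < D2 := by rw [hD2def]; positivity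
  intro p q hp hq s hs2 m N A ω hω hA r hr hrq x xhat y ε hε hxε hxhatε hmin
  set β := (1/q).toReal with hβdef
  set α := (1/r).toReal with hαdef
  have hs0 : (0:ℝ) < (s:ℝ) := by
    have : 0 < s := by omega
    exact_mod_cast this
  have hsR : (2:ℝ) ≤ (s:ℝ) := by exact_mod_cast hs2
  have hβ0 : 0 ≤ β := ENNReal.toReal_nonneg
  have hβ1 : β ≤ 1 := by
    rw [hβdef]
    calc (1/q).toReal ≤ (1:ℝ≥0∞).toReal :=
          ENNReal.toReal_mono ENNReal.one_ne_top (by simpa using ENNReal.inv_le_one.mpr hq)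
      _ = 1 := ENNReal.toReal_one
  have hr_ne : 1/r ≠ ⊤ :=
    ne_top_of_le_ne_top ENNReal.one_ne_top (by simpa using ENNReal.inv_le_one.mpr hr)
  have hαβ : β ≤ α := by
    rw [hβdef, hαdef]
    exact ENNReal.toReal_mono hr_ne (by simp only [one_div]; exact ENNReal.inv_le_inv.mpr hrq)
  have hα0 : 0 ≤ α := ENNReal.toReal_nonneg
  set v := xhat - x with hvdef
  set a : Fin N → ℝ := fun i => ‖v i‖ with hadef
  have ha0 : ∀ i, 0 ≤ a i := fun i => norm_nonneg _
  have hω0 : ∀ i, 0 ≤ ω i := fun i => le_trans hθ0.le (hω i).1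
  set η := cnormE p (A.mulVec v) with hηdef
  have hη0 : 0 ≤ η := cnormE_nonneg _ _
  have hη2 : η ≤ 2*ε := by
    have hAv : A.mulVec v = (A.mulVec xhat - y) + -(A.mulVec x - y) := by
      rw [hvdef, Matrix.mulVec_sub]; abel
    calc η = cnormE p ((A.mulVec xhat - y) + -(A.mulVec x - y)) := by rw [hηdef, hAv]
      _ ≤ cnormE p (A.mulVec xhat - y) + cnormE p (-(A.mulVec x - y)) := cnormE_add_le hp _ _
      _ = cnormE p (A.mulVec xhat - y) + cnormE p (A.mulVec x - y) := by rw [cnormE_neg]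
      _ ≤ ε + ε := add_le_add hxhatε hxε
      _ = 2*ε := by ring
  set W := wnorm ω v with hWdef
  have hWsum : W = ∑ i, ω i * a i := rfl
  have hW0 : 0 ≤ W := Finset.sum_nonneg fun i _ => mul_nonneg (hω0 i) (ha0 i)
  have hpow1β : (0:ℝ) < (s:ℝ)^(1-β) := Real.rpow_pos_of_pos hs0 _
  -- ℓ1 consequence of the RNSP
  have hA1 : ∀ S : Finset (Fin N), S.card ≤ s →
      ∑ i ∈ S, a i ≤ ρ * (∑ i ∈ Sᶜ, ω i * a i) + γ * (s:ℝ)^(1-β) * η := by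
    intro S hS
    have hRN := hA v S hS
    rw [wnorm_restrict, ← hβdef, ← hηdef] at hRN
    have hcard : ((S.card:ℕ):ℝ) ≤ (s:ℝ) := by exact_mod_cast hS
    have hstep : ∑ i ∈ S, a i ≤ (s:ℝ)^(1-β) * cnormE q (restrict S v) := by
      by_cases hqtop : q = ⊤
      · subst hqtop
        have hβ0' : β = 0 := by rw [hβdef]; simp
        have hM0 : 0 ≤ cnormE ⊤ (restrict S v) := cnormE_nonneg _ _
        have h1 : ∑ i ∈ S, a i ≤ S.card • cnormE ⊤ (restrict S v) :=
          Finset.sum_le_card_nsmul S a _ (fun i hi => abs_le_cnormE_top_restrict S v hi)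
        rw [nsmul_eq_mul] at h1
        calc ∑ i ∈ S, a i ≤ (S.card:ℝ) * cnormE ⊤ (restrict S v) := h1
          _ ≤ (s:ℝ) * cnormE ⊤ (restrict S v) := mul_le_mul_of_nonneg_right hcard hM0
          _ = (s:ℝ)^(1-β) * cnormE ⊤ (restrict S v) := by
              rw [hβ0', sub_zero, Real.rpow_one]
      · have hq1 : 1 ≤ q.toReal := one_le_toReal' hq hqtop
        have hqt0 : 0 < q.toReal := by linarith
        have hβq : β = 1/q.toReal := by rw [hβdef, ENNReal.toReal_div, ENNReal.toReal_one]
        have hres : cnormE q (restrict S v) = (∑ i ∈ S, a i ^ q.toReal)^(1/q.toReal) :=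
          cnormE_restrict_of_ne_top hqtop hqt0 S v
        have H := rpow_sum_le S a ha0 le_rfl hq1
        simp only [Real.rpow_one, one_div_one] at H
        calc ∑ i ∈ S, a i
            ≤ (S.card:ℝ)^(1 - 1/q.toReal) * (∑ i ∈ S, a i^q.toReal)^(1/q.toReal) := H
          _ ≤ (s:ℝ)^(1-β) * cnormE q (restrict S v) := by
              rw [hres, hβq]
              refine mul_le_mul_of_nonneg_right
                (Real.rpow_le_rpow (Nat.cast_nonneg _) hcard ?_)
                (Real.rpow_nonneg (Finset.sum_nonneg fun i _ => Real.rpow_nonneg (ha0 i) _) _)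
              have : β ≤ 1 := hβ1
              rw [hβq] at this
              linarith
    calc ∑ i ∈ S, a i ≤ (s:ℝ)^(1-β) * cnormE q (restrict S v) := hstep
      _ ≤ (s:ℝ)^(1-β) * (ρ / (s:ℝ)^(1-β) * (∑ i ∈ Sᶜ, ω i * a i) + γ * η) :=
          mul_le_mul_of_nonneg_left hRN hpow1β.le
      _ = ρ * (∑ i ∈ Sᶜ, ω i * a i) + γ * (s:ℝ)^(1-β) * η := by
          field_simp
  -- the key estimate, for an arbitrary sparse competitor z
  have key : ∀ z : Fin N → ℂ, CSparse s z →
      cnormE r v ≤ (4*D1/θ + 2*γ) * (s:ℝ)^(α-β) * ε +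
        2*D2/θ * (s:ℝ)^(α-1) * wnorm ω (x - z) := by
    intro z hz
    set t := wnorm ω (x - z) with htdef
    have ht0 : 0 ≤ t :=
      Finset.sum_nonneg fun i _ => mul_nonneg (hω0 i) (norm_nonneg _)
    set S0 := Finset.univ.filter (fun i => z i ≠ 0) with hS0def
    have hS0card : S0.card ≤ s := hz
    have hz0 : ∀ i ∈ S0ᶜ, z i = 0 := by
      intro i hi
      rw [Finset.mem_compl, hS0def, Finset.mem_filter] at hi
      simpa using hi
    have hxtail : ∑ i ∈ S0ᶜ, ω i * ‖x i‖ ≤ t := by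
      rw [htdef]
      calc ∑ i ∈ S0ᶜ, ω i * ‖x i‖
          = ∑ i ∈ S0ᶜ, ω i * ‖(x - z) i‖ := Finset.sum_congr rfl fun i hi => by
            rw [Pi.sub_apply, hz0 i hi, sub_zero]
        _ ≤ ∑ i, ω i * ‖(x - z) i‖ :=
            Finset.sum_le_sum_of_subset_of_nonneg (Finset.subset_univ _)
              (fun i _ _ => mul_nonneg (hω0 i) (norm_nonneg _))
        _ = wnorm ω (x - z) := rfl
    have hminx : wnorm ω xhat ≤ wnorm ω x := hmin x hxε
    have habs_sub : ∀ (u w : ℂ), ‖u - w‖ ≤ ‖u‖ + ‖w‖ := by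
      intro u w
      rw [sub_eq_add_neg]
      exact (norm_add_le u (-w)).trans (by rw [norm_neg])
    have htri1 : ∀ i, ‖x i‖ ≤ ‖xhat i‖ + a i := by
      intro i
      have hx_eq : x i = xhat i - v i := by
        show x i = xhat i - (xhat i - x i)
        ring
      rw [hx_eq]
      exact habs_sub _ _
    have htri2 : ∀ i, a i ≤ ‖xhat i‖ + ‖x i‖ := by
      intro i
      have : a i = ‖xhat i - x i‖ := rfl
      rw [this]
      exact habs_sub _ _
    have hsum1 : ∑ i ∈ S0, ω i * ‖x i‖ - ∑ i ∈ S0, ω i * a i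
        ≤ ∑ i ∈ S0, ω i * ‖xhat i‖ := by
      rw [← Finset.sum_sub_distrib]
      refine Finset.sum_le_sum fun i _ => ?_
      have h := mul_le_mul_of_nonneg_left (htri1 i) (hω0 i)
      rw [mul_add] at h
      linarith
    have hsum2 : ∑ i ∈ S0ᶜ, ω i * a i - ∑ i ∈ S0ᶜ, ω i * ‖x i‖
        ≤ ∑ i ∈ S0ᶜ, ω i * ‖xhat i‖ := by
      rw [← Finset.sum_sub_distrib]
      refine Finset.sum_le_sum fun i _ => ?_
      have h := mul_le_mul_of_nonneg_left (htri2 i) (hω0 i)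
      rw [mul_add] at h
      linarith
    have hx_split : wnorm ω x
        = ∑ i ∈ S0, ω i * ‖x i‖ + ∑ i ∈ S0ᶜ, ω i * ‖x i‖ :=
      (Finset.sum_add_sum_compl S0 _).symm
    have hxhat_split : wnorm ω xhat
        = ∑ i ∈ S0, ω i * ‖xhat i‖ + ∑ i ∈ S0ᶜ, ω i * ‖xhat i‖ :=
      (Finset.sum_add_sum_compl S0 _).symm
    have hW_split : W = ∑ i ∈ S0, ω i * a i + ∑ i ∈ S0ᶜ, ω i * a i :=
      (Finset.sum_add_sum_compl S0 _).symm
    have hKey : ∑ i ∈ S0ᶜ, ω i * a i ≤ ∑ i ∈ S0, ω i * a i + 2*t := by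
      linarith
    have hωa_le : ∑ i ∈ S0, ω i * a i ≤ ∑ i ∈ S0, a i :=
      Finset.sum_le_sum fun i _ => by
        calc ω i * a i ≤ 1 * a i := mul_le_mul_of_nonneg_right (hω i).2 (ha0 i)
          _ = a i := one_mul _
    have hA1S0 := hA1 S0 hS0card
    have hu : (1-ρ) * (∑ i ∈ S0ᶜ, ω i * a i) ≤ γ*(s:ℝ)^(1-β)*η + 2*t := by
      have := hA1S0
      linarith [hKey, hωa_le]
    have hG0 : 0 ≤ γ*(s:ℝ)^(1-β)*η := by positivity
    have hu0 : 0 ≤ ∑ i ∈ S0ᶜ, ω i * a i :=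
      Finset.sum_nonneg fun i _ => mul_nonneg (hω0 i) (ha0 i)
    have hc : ∑ i ∈ S0, ω i * a i ≤ ρ * (∑ i ∈ S0ᶜ, ω i * a i) + γ*(s:ℝ)^(1-β)*η := by
      linarith
    have hWb : W ≤ D1 * (s:ℝ)^(1-β) * η + D2 * t := by
      have hgoal : (1-ρ) * W ≤ (1-ρ) * (D1 * (s:ℝ)^(1-β) * η + D2 * t) := by
        have hrhs : (1-ρ) * (D1 * (s:ℝ)^(1-β) * η + D2 * t)
            = 2*(γ*(s:ℝ)^(1-β)*η) + 2*(1+ρ)*t := by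
          rw [hD1def, hD2def]; field_simp
        rw [hrhs]
        have hp1 := mul_le_mul_of_nonneg_left hc h1ρ.le
        have hp2 := mul_le_mul_of_nonneg_left hu hρ0.le
        have hWeq : (1-ρ)*W = (1-ρ)*(∑ i ∈ S0, ω i * a i)
            + (1-ρ)*(∑ i ∈ S0ᶜ, ω i * a i) := by rw [hW_split]; ring
        linarith [hp1, hp2, hu, hWeq]
      exact le_of_mul_le_mul_left hgoal h1ρ
    have hEβ : (0:ℝ) < (s:ℝ)^(α-β) := Real.rpow_pos_of_pos hs0 _
    have hE1 : (0:ℝ) < (s:ℝ)^(α-1) := Real.rpow_pos_of_pos hs0 _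
    by_cases hrtop : r = ⊤
    · -- the case r = ⊤ (then also q = ⊤)
      have hqtop : q = ⊤ := top_le_iff.mp (hrtop ▸ hrq)
      have hβ0' : β = 0 := by rw [hβdef, hqtop]; simp
      have hα0' : α = 0 := by rw [hαdef, hrtop]; simp
      have hgoal_eq1 : (s:ℝ)^(α-β) = 1 := by rw [hα0', hβ0', sub_zero, Real.rpow_zero]
      have hgoal_eq2 : (s:ℝ)^(α-(1:ℝ)) = (s:ℝ)⁻¹ := by
        rw [hα0', zero_sub, Real.rpow_neg_one]
      rw [hgoal_eq1, hgoal_eq2]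
      rcases isEmpty_or_nonempty (Fin N) with hN | hN
      · have hz' : cnormE r v = 0 := by
          rw [hrtop]; unfold cnormE; rw [if_pos rfl]; exact Real.iSup_of_isEmpty _
        rw [hz']
        positivity
      · obtain ⟨i0, hi0⟩ := Finite.exists_max a
        have hXle : cnormE r v ≤ a i0 := by
          rw [hrtop]; unfold cnormE; rw [if_pos rfl]; exact ciSup_le hi0
        have hRN := hA v {i0} (by simp; omega)
        rw [wnorm_restrict, ← hβdef, ← hηdef] at hRN
        have hai0 : a i0 ≤ cnormE q (restrict {i0} v) := by
          rw [hqtop]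
          exact abs_le_cnormE_top_restrict _ v (Finset.mem_singleton_self i0)
        have hWres : ∑ i ∈ ({i0} : Finset (Fin N))ᶜ, ω i * ‖v i‖ ≤ W := by
          rw [hWdef]
          exact Finset.sum_le_sum_of_subset_of_nonneg (Finset.subset_univ _)
            (fun i _ _ => mul_nonneg (hω0 i) (norm_nonneg _))
        have h1 : a i0 ≤ ρ / (s:ℝ)^(1-β) * W + γ * η := by
          refine hai0.trans (hRN.trans ?_)
          have hco : (0:ℝ) ≤ ρ / (s:ℝ)^(1-β) := by positivity
          exact add_le_add_left (mul_le_mul_of_nonneg_left hWres hco) _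
        rw [hβ0', sub_zero, Real.rpow_one] at h1
        have hWb' := hWb
        rw [hβ0', sub_zero, Real.rpow_one] at hWb'
        have h2 : ρ/(s:ℝ) * W ≤ ρ/(s:ℝ) * (D1*(s:ℝ)*η + D2*t) :=
          mul_le_mul_of_nonneg_left hWb' (by positivity)
        have h3 : ρ/(s:ℝ) * (D1*(s:ℝ)*η + D2*t) = ρ*D1*η + ρ*D2*(t/(s:ℝ)) := by
          field_simp
        have hts0 : 0 ≤ t/(s:ℝ) := by positivity
        have hρθ1 : ρ*θ ≤ 1 := mul_le_one₀ hρ1.le hθ0.le hθ1.le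
        have hρD1 : ρ*D1 ≤ 2*D1/θ := by
          rw [le_div_iff₀ hθ0]
          have := mul_le_mul_of_nonneg_left hρθ1 hD1pos.le
          linarith [this]
        have hρD2 : ρ*D2 ≤ 2*D2/θ := by
          rw [le_div_iff₀ hθ0]
          have := mul_le_mul_of_nonneg_left hρθ1 hD2pos.le
          linarith [this]
        have e1 : ρ*D1*η + γ*η ≤ (4*D1/θ + 2*γ)*ε := by
          calc ρ*D1*η + γ*η = (ρ*D1 + γ)*η := by ring
            _ ≤ (2*D1/θ + γ)*(2*ε) := by
                refine mul_le_mul (by linarith) hη2 hη0 (by positivity)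
            _ = (4*D1/θ + 2*γ)*ε := by ring
        have e2 : ρ*D2*(t/(s:ℝ)) ≤ 2*D2/θ*(t/(s:ℝ)) :=
          mul_le_mul_of_nonneg_right hρD2 hts0
        calc cnormE r v ≤ a i0 := hXle
          _ ≤ ρ/(s:ℝ)*W + γ*η := h1
          _ ≤ (ρ*D1*η + ρ*D2*(t/(s:ℝ))) + γ*η := by rw [← h3]; linarith [h2]
          _ ≤ (4*D1/θ + 2*γ)*ε + 2*D2/θ*(t/(s:ℝ)) := by linarith [e1, e2]
          _ = (4*D1/θ + 2*γ)*1*ε + 2*D2/θ*(s:ℝ)⁻¹*t := by ring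
    · -- the case r ≠ ⊤
      have hrt1 : 1 ≤ r.toReal := one_le_toReal' hr hrtop
      have hrt0 : 0 < r.toReal := by linarith
      have hαr : α = 1/r.toReal := by rw [hαdef, ENNReal.toReal_div, ENNReal.toReal_one]
      have hX : cnormE r v = (∑ i, a i ^ r.toReal)^(1/r.toReal) := cnormE_of_ne_top hrtop v
      obtain ⟨T, hTcard, hTmax⟩ := exists_maxset (min_le_right s N) a
      have hTs : T.card ≤ s := hTcard ▸ min_le_left s N
      have hTsR : (T.card:ℝ) ≤ (s:ℝ) := by exact_mod_cast hTs
      set Sa := ∑ i, a i with hSdef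
      have hS0R : 0 ≤ Sa := Finset.sum_nonneg fun i _ => ha0 i
      have hSW : θ * Sa ≤ W := by
        rw [hWsum, hSdef, Finset.mul_sum]
        exact Finset.sum_le_sum fun i _ => mul_le_mul_of_nonneg_right (hω i).1 (ha0 i)
      -- subadditivity : split the r-norm over T and Tᶜ
      have hid2 : (∑ i, (if i ∈ T then a i else 0)^r.toReal) = ∑ i ∈ T, a i ^ r.toReal := by
        rw [show (∑ i, (if i ∈ T then a i else 0)^r.toReal)
            = ∑ i, (if i ∈ T then a i ^ r.toReal else 0) from
          Finset.sum_congr rfl fun i _ => by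
            split
            · rfl
            · exact Real.zero_rpow hrt0.ne',
          Finset.sum_ite_mem, Finset.univ_inter]
      have hid3 : (∑ i, (if i ∈ Tᶜ then a i else 0)^r.toReal) = ∑ i ∈ Tᶜ, a i ^ r.toReal := by
        rw [show (∑ i, (if i ∈ Tᶜ then a i else 0)^r.toReal)
            = ∑ i, (if i ∈ Tᶜ then a i ^ r.toReal else 0) from
          Finset.sum_congr rfl fun i _ => by
            split
            · rfl
            · exact Real.zero_rpow hrt0.ne',
          Finset.sum_ite_mem, Finset.univ_inter]
      have hXle : cnormE r v ≤ (∑ i ∈ T, a i ^ r.toReal)^(1/r.toReal)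
          + (∑ i ∈ Tᶜ, a i ^ r.toReal)^(1/r.toReal) := by
        rw [hX, ← hid2, ← hid3]
        have hsub := Real.Lp_add_le_of_nonneg (s := Finset.univ)
          (f := fun i => if i ∈ T then a i else 0) (g := fun i => if i ∈ Tᶜ then a i else 0)
          hrt1 (fun i _ => by split; exacts [ha0 i, le_rfl])
          (fun i _ => by split; exacts [ha0 i, le_rfl])
        have hid1 : ∀ i, ((if i ∈ T then a i else 0) + (if i ∈ Tᶜ then a i else 0)) = a i := by
          intro i
          by_cases h : i ∈ T <;> simp [h, Finset.mem_compl]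
        rw [show (∑ i, ((if i ∈ T then a i else 0) + (if i ∈ Tᶜ then a i else 0)) ^ r.toReal)
            = ∑ i, a i ^ r.toReal from
          Finset.sum_congr rfl fun i _ => by rw [hid1]] at hsub
        exact hsub
      have h1rt : (0:ℝ) < 1/r.toReal := by positivity
      -- tail (Stechkin) bound
      have htail : (∑ i ∈ Tᶜ, a i ^ r.toReal)^(1/r.toReal) ≤ (s:ℝ)^(α-1) * Sa := by
        by_cases hsN : s ≤ N
        · have hTcards : T.card = s := by rw [hTcard]; exact min_eq_left hsN
          have hbound : ∀ j, j ∉ T → (s:ℝ) * a j ≤ Sa := by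
            intro j hj
            have h2 : T.card • a j ≤ ∑ i ∈ T, a i :=
              Finset.card_nsmul_le_sum T a (a j) (fun i hi => hTmax i hi j hj)
            rw [nsmul_eq_mul, hTcards] at h2
            have h3 : ∑ i ∈ T, a i ≤ Sa :=
              Finset.sum_le_sum_of_subset_of_nonneg (Finset.subset_univ _)
                (fun i _ _ => ha0 i)
            linarith
          rcases eq_or_lt_of_le hS0R with hSz | hSpos
          · have hall : ∀ i, a i = 0 := by
              intro i
              have h4 := (Finset.sum_eq_zero_iff_of_nonneg (fun i _ => ha0 i)).mp hSz.symm
              exact h4 i (Finset.mem_univ i)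
            have h5 : (∑ i ∈ Tᶜ, a i ^ r.toReal) = 0 :=
              Finset.sum_eq_zero fun i _ => by rw [hall i, Real.zero_rpow hrt0.ne']
            rw [h5, Real.zero_rpow h1rt.ne']
            positivity
          · have hkey2 : ∑ i ∈ Tᶜ, a i ^ r.toReal ≤ (Sa/(s:ℝ))^(r.toReal-1) * Sa := by
              have hq0 : (0:ℝ) ≤ (Sa/(s:ℝ))^(r.toReal-1) := by positivity
              calc ∑ i ∈ Tᶜ, a i ^ r.toReal
                  ≤ ∑ i ∈ Tᶜ, (Sa/(s:ℝ))^(r.toReal-1) * a i := by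
                    refine Finset.sum_le_sum fun j hj => ?_
                    have hj' : j ∉ T := Finset.mem_compl.mp hj
                    have haj : a j ≤ Sa/(s:ℝ) := by
                      rw [le_div_iff₀ hs0]
                      linarith [hbound j hj']
                    rcases eq_or_lt_of_le (ha0 j) with hz' | hz'
                    · rw [← hz', Real.zero_rpow hrt0.ne']
                      positivity
                    · calc a j ^ r.toReal = a j ^ (r.toReal-1) * a j := by
                            rw [← Real.rpow_add_one hz'.ne' (r.toReal-1)]
                            norm_num
                        _ ≤ (Sa/(s:ℝ))^(r.toReal-1) * a j :=
                            mul_le_mul_of_nonneg_right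
                              (Real.rpow_le_rpow (ha0 j) haj (by linarith)) (ha0 j)
                _ = (Sa/(s:ℝ))^(r.toReal-1) * ∑ i ∈ Tᶜ, a i := by rw [← Finset.mul_sum]
                _ ≤ (Sa/(s:ℝ))^(r.toReal-1) * Sa := by
                    refine mul_le_mul_of_nonneg_left ?_ hq0
                    exact Finset.sum_le_sum_of_subset_of_nonneg (Finset.subset_univ _)
                      (fun i _ _ => ha0 i)
            have hL0 : 0 ≤ ∑ i ∈ Tᶜ, a i ^ r.toReal :=
              Finset.sum_nonneg fun i _ => Real.rpow_nonneg (ha0 i) _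
            have hfin : (∑ i ∈ Tᶜ, a i ^ r.toReal)^(1/r.toReal)
                ≤ ((Sa/(s:ℝ))^(r.toReal-1) * Sa)^(1/r.toReal) :=
              Real.rpow_le_rpow hL0 hkey2 h1rt.le
            refine hfin.trans (le_of_eq ?_)
            rw [Real.div_rpow hS0R hs0.le]
            rw [div_mul_eq_mul_div, ← Real.rpow_add_one hSpos.ne' (r.toReal-1)]
            rw [show r.toReal - 1 + 1 = r.toReal by ring]
            rw [Real.div_rpow (Real.rpow_nonneg hS0R _) (Real.rpow_nonneg hs0.le _)]
            rw [← Real.rpow_mul hS0R, ← Real.rpow_mul hs0.le]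
            rw [mul_one_div_cancel hrt0.ne', Real.rpow_one]
            rw [show (r.toReal - 1) * (1/r.toReal) = 1 - 1/r.toReal by
              field_simp]
            rw [hαr, show (1/r.toReal - 1 : ℝ) = -(1 - 1/r.toReal) by ring,
              Real.rpow_neg hs0.le]
            rw [div_eq_mul_inv, mul_comm]
        · push_neg at hsN
          have hTuniv : T = Finset.univ := by
            apply Finset.eq_univ_of_card
            rw [hTcard, Fintype.card_fin]
            omega
          rw [hTuniv, Finset.compl_univ]
          rw [show (∑ i ∈ (∅ : Finset (Fin N)), a i ^ r.toReal) = 0 from Finset.sum_empty]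
          rw [Real.zero_rpow h1rt.ne']
          positivity
      -- head bound via Hölder
      have hhead : (∑ i ∈ T, a i ^ r.toReal)^(1/r.toReal)
          ≤ (s:ℝ)^(α-β) * cnormE q (restrict T v) := by
        by_cases hqtop : q = ⊤
        · have hβ0' : β = 0 := by rw [hβdef, hqtop]; simp
          have hM0 : 0 ≤ cnormE q (restrict T v) := cnormE_nonneg _ _
          have h1 : ∑ i ∈ T, a i ^ r.toReal ≤ (T.card:ℝ) * cnormE q (restrict T v) ^ r.toReal := by
            have hle : ∀ i ∈ T, a i ^ r.toReal ≤ cnormE q (restrict T v) ^ r.toReal := by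
              intro i hi
              refine Real.rpow_le_rpow (ha0 i) ?_ (by linarith)
              rw [hqtop]
              exact abs_le_cnormE_top_restrict T v hi
            have h7 := Finset.sum_le_card_nsmul T _ _ hle
            rwa [nsmul_eq_mul] at h7
          have hL0 : 0 ≤ ∑ i ∈ T, a i ^ r.toReal :=
            Finset.sum_nonneg fun i _ => Real.rpow_nonneg (ha0 i) _
          have h2 : (∑ i ∈ T, a i ^ r.toReal)^(1/r.toReal)
              ≤ ((s:ℝ) * cnormE q (restrict T v)^r.toReal)^(1/r.toReal) := by
            refine Real.rpow_le_rpow hL0 (h1.trans ?_) h1rt.le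
            exact mul_le_mul_of_nonneg_right hTsR (by positivity)
          refine h2.trans (le_of_eq ?_)
          rw [Real.mul_rpow hs0.le (by positivity), ← Real.rpow_mul hM0]
          rw [show r.toReal * (1/r.toReal) = 1 by field_simp, Real.rpow_one]
          rw [hαr, hβ0', sub_zero]
        · have hq1 : 1 ≤ q.toReal := one_le_toReal' hq hqtop
          have hqt0 : 0 < q.toReal := by linarith
          have hβq : β = 1/q.toReal := by rw [hβdef, ENNReal.toReal_div, ENNReal.toReal_one]
          have hrtqt : r.toReal ≤ q.toReal := ENNReal.toReal_mono hqtop hrq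
          have H := rpow_sum_le T a ha0 hrt1 hrtqt
          have hres : cnormE q (restrict T v) = (∑ i ∈ T, a i ^ q.toReal)^(1/q.toReal) :=
            cnormE_restrict_of_ne_top hqtop hqt0 T v
          refine H.trans ?_
          rw [hres, hαr, hβq]
          refine mul_le_mul_of_nonneg_right
            (Real.rpow_le_rpow (Nat.cast_nonneg _) hTsR ?_)
            (Real.rpow_nonneg (Finset.sum_nonneg fun i _ => Real.rpow_nonneg (ha0 i) _) _)
          have h6 : 1/q.toReal ≤ 1/r.toReal := one_div_le_one_div_of_le hrt0 hrtqt
          linarith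
      -- RNSP applied to T
      have hRN := hA v T hTs
      rw [wnorm_restrict, ← hβdef, ← hηdef] at hRN
      have hWres : ∑ i ∈ Tᶜ, ω i * ‖v i‖ ≤ W := by
        rw [hWdef]
        exact Finset.sum_le_sum_of_subset_of_nonneg (Finset.subset_univ _)
          (fun i _ _ => mul_nonneg (hω0 i) (norm_nonneg _))
      have hRNW : cnormE q (restrict T v) ≤ ρ/(s:ℝ)^(1-β) * W + γ*η := by
        refine hRN.trans ?_
        have hco : (0:ℝ) ≤ ρ / (s:ℝ)^(1-β) := by positivity
        exact add_le_add_left (mul_le_mul_of_nonneg_left hWres hco) _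
      -- combine everything
      have hpow : (s:ℝ)^(α-β) * (ρ/(s:ℝ)^(1-β)) = ρ * (s:ℝ)^(α-1) := by
        rw [show (s:ℝ)^(α-β) * (ρ/(s:ℝ)^(1-β)) = ρ * ((s:ℝ)^(α-β)/(s:ℝ)^(1-β)) by ring]
        rw [← Real.rpow_sub hs0]
        rw [show α - β - (1 - β) = α - 1 by ring]
      have hpow2 : (s:ℝ)^(α-1) * (s:ℝ)^(1-β) = (s:ℝ)^(α-β) := by
        rw [← Real.rpow_add hs0]
        rw [show α - 1 + (1 - β) = α - β by ring]
      have hchain : cnormE r v ≤ (s:ℝ)^(α-β)*(ρ/(s:ℝ)^(1-β) * W + γ*η) + (s:ℝ)^(α-1)*Sa := by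
        calc cnormE r v
            ≤ (∑ i ∈ T, a i ^ r.toReal)^(1/r.toReal)
              + (∑ i ∈ Tᶜ, a i ^ r.toReal)^(1/r.toReal) := hXle
          _ ≤ (s:ℝ)^(α-β) * cnormE q (restrict T v) + (s:ℝ)^(α-1) * Sa :=
              add_le_add hhead htail
          _ ≤ (s:ℝ)^(α-β)*(ρ/(s:ℝ)^(1-β) * W + γ*η) + (s:ℝ)^(α-1)*Sa :=
              add_le_add_left (mul_le_mul_of_nonneg_left hRNW hEβ.le) _
      have hSle : (s:ℝ)^(α-1)*Sa ≤ (s:ℝ)^(α-1)*(W/θ) := by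
        refine mul_le_mul_of_nonneg_left ?_ hE1.le
        rw [le_div_iff₀ hθ0]
        linarith [hSW]
      have hρ1θ : ρ ≤ 1/θ := by
        rw [le_div_iff₀ hθ0]
        exact mul_le_one₀ hρ1.le hθ0.le hθ1.le
      have hmid : cnormE r v ≤ 2/θ * ((s:ℝ)^(α-1) * W) + γ*(s:ℝ)^(α-β)*η := by
        have hexp : (s:ℝ)^(α-β)*(ρ/(s:ℝ)^(1-β) * W + γ*η)
            = ρ*(s:ℝ)^(α-1)*W + γ*(s:ℝ)^(α-β)*η := by
          rw [show (s:ℝ)^(α-β)*(ρ/(s:ℝ)^(1-β) * W + γ*η)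
              = ((s:ℝ)^(α-β)*(ρ/(s:ℝ)^(1-β)))*W + γ*(s:ℝ)^(α-β)*η by ring, hpow]
        rw [hexp] at hchain
        have h7 : ρ*(s:ℝ)^(α-1)*W ≤ 1/θ * ((s:ℝ)^(α-1)*W) := by
          rw [show ρ*(s:ℝ)^(α-1)*W = ρ * ((s:ℝ)^(α-1)*W) by ring]
          exact mul_le_mul_of_nonneg_right hρ1θ (by positivity)
        have h8 : (s:ℝ)^(α-1)*(W/θ) = 1/θ * ((s:ℝ)^(α-1)*W) := by ring
        rw [h8] at hSle
        calc cnormE r v ≤ ρ*(s:ℝ)^(α-1)*W + γ*(s:ℝ)^(α-β)*η + (s:ℝ)^(α-1)*Sa := hchain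
          _ ≤ 1/θ * ((s:ℝ)^(α-1)*W) + γ*(s:ℝ)^(α-β)*η + 1/θ * ((s:ℝ)^(α-1)*W) := by
              linarith [h7, hSle]
          _ = 2/θ * ((s:ℝ)^(α-1) * W) + γ*(s:ℝ)^(α-β)*η := by ring
      have hWterm : 2/θ * ((s:ℝ)^(α-1) * W)
          ≤ 2*D1/θ * (s:ℝ)^(α-β) * η + 2*D2/θ * (s:ℝ)^(α-1) * t := by
        have h9 : (s:ℝ)^(α-1) * W ≤ (s:ℝ)^(α-1) * (D1 * (s:ℝ)^(1-β) * η + D2 * t) :=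
          mul_le_mul_of_nonneg_left hWb hE1.le
        have h10 : (s:ℝ)^(α-1) * (D1 * (s:ℝ)^(1-β) * η + D2 * t)
            = D1 * (s:ℝ)^(α-β) * η + D2 * (s:ℝ)^(α-1) * t := by
          rw [show (s:ℝ)^(α-1) * (D1 * (s:ℝ)^(1-β) * η + D2 * t)
              = D1 * ((s:ℝ)^(α-1) * (s:ℝ)^(1-β)) * η + D2 * (s:ℝ)^(α-1) * t by ring, hpow2]
        rw [h10] at h9
        have h11 : (0:ℝ) < 2/θ := by positivity
        calc 2/θ * ((s:ℝ)^(α-1) * W)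
            ≤ 2/θ * (D1 * (s:ℝ)^(α-β) * η + D2 * (s:ℝ)^(α-1) * t) :=
              mul_le_mul_of_nonneg_left h9 h11.le
          _ = 2*D1/θ * (s:ℝ)^(α-β) * η + 2*D2/θ * (s:ℝ)^(α-1) * t := by ring
      have hηterm : (2*D1/θ + γ) * ((s:ℝ)^(α-β) * η) ≤ (4*D1/θ + 2*γ) * (s:ℝ)^(α-β) * ε := by
        calc (2*D1/θ + γ) * ((s:ℝ)^(α-β) * η) ≤ (2*D1/θ + γ) * ((s:ℝ)^(α-β) * (2*ε)) := by
              refine mul_le_mul_of_nonneg_left ?_ (by positivity)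
              exact mul_le_mul_of_nonneg_left hη2 hEβ.le
          _ = (4*D1/θ + 2*γ) * (s:ℝ)^(α-β) * ε := by ring
      calc cnormE r v ≤ 2/θ * ((s:ℝ)^(α-1) * W) + γ*(s:ℝ)^(α-β)*η := hmid
        _ ≤ (2*D1/θ * (s:ℝ)^(α-β) * η + 2*D2/θ * (s:ℝ)^(α-1) * t) + γ*(s:ℝ)^(α-β)*η := by
            linarith [hWterm]
        _ = (2*D1/θ + γ) * ((s:ℝ)^(α-β) * η) + 2*D2/θ * (s:ℝ)^(α-1) * t := by ring
        _ ≤ (4*D1/θ + 2*γ) * (s:ℝ)^(α-β) * ε + 2*D2/θ * (s:ℝ)^(α-1) * t := by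
            linarith [hηterm]
  -- conclude via the infimum
  have hTne : {t | ∃ z : Fin N → ℂ, CSparse s z ∧ t = wnorm ω (x - z)}.Nonempty := by
    refine ⟨wnorm ω x, 0, ?_, by simp⟩
    unfold CSparse
    simp
  have hK : 0 < 2*D2/θ * (s:ℝ)^(α-1) := by positivity
  have hlb : ∀ t' ∈ {t | ∃ z : Fin N → ℂ, CSparse s z ∧ t = wnorm ω (x - z)},
      (cnormE r v - (4*D1/θ + 2*γ) * (s:ℝ)^(α-β) * ε) / (2*D2/θ * (s:ℝ)^(α-1)) ≤ t' := by
    rintro t' ⟨z, hz, rfl⟩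
    rw [div_le_iff₀ hK]
    have := key z hz
    linarith [this]
  have hsInf := le_csInf hTne hlb
  rw [div_le_iff₀ hK] at hsInf
  have hσ : sigmaS s ω x
      = sInf {t | ∃ z : Fin N → ℂ, CSparse s z ∧ t = wnorm ω (x - z)} := rfl
  rw [hσ]
  linarith [hsInf]


end
end

section
/- With notation as above (q ≥ 1, ω ∈ [θ,1]^N, θ ∈ (0,1)), define the cone T_{ρ,s}^q = {x ∈ ℂ^N : ∃ S ⊂ [N], |S| = s, ‖x_S‖_q ≥ (ρ/s^{1−1/q})‖x_{S^c}‖_{ω,1}}. Then T_{ρ,s}^q ∩ B_{ℓ_q^N} ⊆ (2 + 1/(ρθ)) · D_s^q, where B_{ℓ_q^N} is the unit ℓ_q ball and D_s^q is the convex hull of unit-norm s-sparse vectors. -/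
open scoped Pointwise

noncomputable section

/-- The ℓ_q norm of a complex vector. -/
def cnorm (q : ℝ) {n : ℕ} (x : Fin n → ℂ) : ℝ :=
  (∑ i, ‖x i‖ ^ q) ^ (1 / q)

/-- Σ_s^q : the set of s-sparse vectors of unit ℓ_q norm. -/
def SigmaSq (s : ℕ) (q : ℝ) (n : ℕ) : Set (Fin n → ℂ) :=
  {x | CSparse s x ∧ cnorm q x = 1}

/-- The cone T_{ρ,s}^q. -/
def Tcone (ρ : ℝ) (s : ℕ) (q : ℝ) {n : ℕ} (ω : Fin n → ℝ) : Set (Fin n → ℂ) :=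
  {x | ∃ S : Finset (Fin n), S.card = s ∧
    ρ / (s : ℝ) ^ (1 - 1 / q) * wnorm ω (restrict Sᶜ x) ≤ cnorm q (restrict S x)}

namespace StatementAux

variable {N : ℕ} {q : ℝ} {s : ℕ}

lemma cnorm_nonneg (q : ℝ) (x : Fin N → ℂ) : 0 ≤ cnorm q x :=
  Real.rpow_nonneg (Finset.sum_nonneg fun i _ => Real.rpow_nonneg (norm_nonneg _) q) _

lemma cnorm_mono (hq : 1 ≤ q) {x y : Fin N → ℂ}
    (h : ∀ i, ‖x i‖ ≤ ‖y i‖) : cnorm q x ≤ cnorm q y := by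
  apply Real.rpow_le_rpow (Finset.sum_nonneg fun i _ => Real.rpow_nonneg (norm_nonneg _) q)
  · exact Finset.sum_le_sum fun i _ => Real.rpow_le_rpow (norm_nonneg _) (h i) (by linarith)
  · positivity

lemma cnorm_restrict_le (hq : 1 ≤ q) (S : Finset (Fin N)) (x : Fin N → ℂ) :
    cnorm q (restrict S x) ≤ cnorm q x := by
  apply cnorm_mono hq
  intro i
  unfold restrict
  split <;> simp [norm_nonneg]

lemma cnorm_eq_zero (hq : 1 ≤ q) {x : Fin N → ℂ} (h : cnorm q x = 0) : x = 0 := by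
  have hq0 : q ≠ 0 := by positivity
  unfold cnorm at h
  rw [Real.rpow_eq_zero (Finset.sum_nonneg fun i _ => Real.rpow_nonneg (norm_nonneg _) q)
    (by positivity)] at h
  have := (Finset.sum_eq_zero_iff_of_nonneg
    (fun i _ => Real.rpow_nonneg (norm_nonneg _) q)).1 h
  funext i
  have hi := this i (Finset.mem_univ i)
  rw [Real.rpow_eq_zero (norm_nonneg _) hq0] at hi
  simpa using hi

lemma cnorm_smul (hq : 1 ≤ q) (c : ℝ) (x : Fin N → ℂ) :
    cnorm q (c • x) = |c| * cnorm q x := by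
  have hq0 : q ≠ 0 := by positivity
  unfold cnorm
  have h1 : ∀ i, ‖(c • x) i‖ ^ q = |c| ^ q * ‖x i‖ ^ q := by
    intro i
    have h2 : ‖(c • x) i‖ = |c| * ‖x i‖ := by
      have : (c • x) i = (c : ℂ) * x i := by simp [Pi.smul_apply, Complex.real_smul]
      rw [this, norm_mul, Complex.norm_real, Real.norm_eq_abs]
    rw [h2, Real.mul_rpow (abs_nonneg c) (norm_nonneg _)]
  simp_rw [h1]
  rw [← Finset.mul_sum, Real.mul_rpow (Real.rpow_nonneg (abs_nonneg c) q)
    (Finset.sum_nonneg fun i _ => Real.rpow_nonneg (norm_nonneg _) q),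
    ← Real.rpow_mul (abs_nonneg c), mul_one_div, div_self hq0, Real.rpow_one]

lemma cnorm_sparse_le (hq : 1 ≤ q) {x : Fin N → ℂ} {b : ℝ}
    (hcard : (Finset.univ.filter fun i => x i ≠ 0).card ≤ s)
    (hb0 : 0 ≤ b) (hb : ∀ i, ‖x i‖ ≤ b) :
    cnorm q x ≤ (s : ℝ) ^ (1/q) * b := by
  have hq0 : q ≠ 0 := by positivity
  have key : ∑ i, ‖x i‖ ^ q ≤ (s : ℝ) * b ^ q := by
    have h1 : ∑ i, ‖x i‖ ^ q
        = ∑ i ∈ Finset.univ.filter (fun i => x i ≠ 0), ‖x i‖ ^ q := by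
      rw [Finset.sum_filter_of_ne]
      intro i _ h hxi
      rw [hxi] at h
      simp [Real.zero_rpow hq0] at h
    rw [h1]
    calc ∑ i ∈ Finset.univ.filter (fun i => x i ≠ 0), ‖x i‖ ^ q
        ≤ ∑ i ∈ Finset.univ.filter (fun i => x i ≠ 0), b ^ q :=
          Finset.sum_le_sum fun i _ =>
            Real.rpow_le_rpow (norm_nonneg _) (hb i) (by linarith)
      _ = (Finset.univ.filter (fun i => x i ≠ 0)).card * b ^ q := by
          rw [Finset.sum_const, nsmul_eq_mul]
      _ ≤ (s : ℝ) * b ^ q := by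
          apply mul_le_mul_of_nonneg_right _ (Real.rpow_nonneg hb0 q)
          exact_mod_cast hcard
  calc cnorm q x ≤ ((s : ℝ) * b ^ q) ^ (1/q) := by
        apply Real.rpow_le_rpow
          (Finset.sum_nonneg fun i _ => Real.rpow_nonneg (norm_nonneg _) q) key
          (by positivity)
    _ = (s : ℝ) ^ (1/q) * b := by
        rw [Real.mul_rpow (Nat.cast_nonneg s) (Real.rpow_nonneg hb0 q),
          ← Real.rpow_mul hb0, mul_one_div, div_self hq0, Real.rpow_one]

lemma exists_top (A : Finset (Fin N)) (f : Fin N → ℝ) (hs : s ≤ A.card) :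
    ∃ T ⊆ A, T.card = s ∧ ∀ i ∈ A, i ∉ T → ∀ j ∈ T, f i ≤ f j := by
  obtain ⟨T, hT, hmax⟩ := Finset.exists_max_image (A.powersetCard s)
    (fun T => ∑ i ∈ T, f i) (Finset.powersetCard_nonempty.2 hs)
  rw [Finset.mem_powersetCard] at hT
  refine ⟨T, hT.1, hT.2, ?_⟩
  intro i hi hiT j hj
  by_contra hlt
  push_neg at hlt
  set T' := insert i (T.erase j) with hT'
  have hiT' : i ∉ T.erase j := fun h => hiT (Finset.mem_of_mem_erase h)
  have hs1 : 0 < s := hT.2 ▸ Finset.card_pos.2 ⟨j, hj⟩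
  have hcard : T'.card = s := by
    rw [hT', Finset.card_insert_of_notMem hiT', Finset.card_erase_of_mem hj, hT.2]
    omega
  have hsub : T' ⊆ A := by
    intro a ha
    rw [hT', Finset.mem_insert] at ha
    rcases ha with rfl | ha
    · exact hi
    · exact hT.1 (Finset.mem_of_mem_erase ha)
  have hmem : T' ∈ A.powersetCard s := Finset.mem_powersetCard.2 ⟨hsub, hcard⟩
  have hle := hmax T' hmem
  rw [hT', Finset.sum_insert hiT'] at hle
  have herase : ∑ a ∈ T.erase j, f a = ∑ a ∈ T, f a - f j := by
    rw [← Finset.add_sum_erase T f hj]; ring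
  rw [herase] at hle
  linarith

lemma zero_mem_K (hq : 1 ≤ q) (hs : 1 ≤ s) (hN : 0 < N) :
    (0 : Fin N → ℂ) ∈ convexHull ℝ (SigmaSq s q N) := by
  have hq0 : q ≠ 0 := by positivity
  set i0 : Fin N := ⟨0, hN⟩
  set u : Fin N → ℂ := fun j => if j = i0 then 1 else 0 with hu
  have hcu : cnorm q u = 1 := by
    unfold cnorm
    have h1 : ∀ j, ‖u j‖ ^ q = if j = i0 then 1 else 0 := by
      intro j
      by_cases h : j = i0 <;> simp [hu, h, Real.zero_rpow hq0, Real.one_rpow]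
    simp_rw [h1]
    simp [Real.one_rpow]
  have hsp : CSparse s u := by
    unfold CSparse
    have hsubs : (Finset.univ.filter fun j => u j ≠ 0) ⊆ {i0} := by
      intro j hj
      rw [Finset.mem_filter] at hj
      rw [Finset.mem_singleton]
      by_contra h
      exact hj.2 (by simp [hu, h])
    calc (Finset.univ.filter fun j => u j ≠ 0).card ≤ ({i0} : Finset (Fin N)).card :=
          Finset.card_le_card hsubs
      _ = 1 := Finset.card_singleton i0
      _ ≤ s := hs
  have hmu : u ∈ SigmaSq s q N := ⟨hsp, hcu⟩
  have hmnu : -u ∈ SigmaSq s q N := by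
    constructor
    · unfold CSparse at hsp ⊢
      convert hsp using 2
      ext j
      simp
    · have h2 : cnorm q (-u) = cnorm q ((-1 : ℝ) • u) := by norm_num
      rw [h2, cnorm_smul hq, hcu]
      norm_num
  have := (convex_convexHull ℝ (SigmaSq s q N))
    (subset_convexHull ℝ _ hmu) (subset_convexHull ℝ _ hmnu)
    (by norm_num : (0:ℝ) ≤ 1/2) (by norm_num : (0:ℝ) ≤ 1/2) (by norm_num)
  convert this using 1
  funext j
  simp

lemma sparse_mem (hq : 1 ≤ q) (hs : 1 ≤ s) (hN : 0 < N) {z : Fin N → ℂ} {c : ℝ}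
    (hz : CSparse s z) (hc : cnorm q z ≤ c) :
    z ∈ c • convexHull ℝ (SigmaSq s q N) := by
  set K := convexHull ℝ (SigmaSq s q N) with hK
  have h0K : (0 : Fin N → ℂ) ∈ K := zero_mem_K hq hs hN
  have hc0 : 0 ≤ c := le_trans (cnorm_nonneg q z) hc
  rcases eq_or_lt_of_le hc0 with h | h
  · have hz0 : z = 0 := cnorm_eq_zero hq (le_antisymm (h ▸ hc) (cnorm_nonneg q z))
    rw [← h, Set.zero_smul_set ⟨0, h0K⟩, hz0]
    rfl
  · rw [Set.mem_smul_set_iff_inv_smul_mem₀ (ne_of_gt h)]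
    by_cases hz0 : z = 0
    · rw [hz0]
      simpa using h0K
    · set t := cnorm q z with ht
      have ht0 : 0 < t := by
        rcases eq_or_lt_of_le (cnorm_nonneg q z) with h' | h'
        · exact absurd (cnorm_eq_zero hq h'.symm) hz0
        · exact h'
      set u : Fin N → ℂ := t⁻¹ • z with hu
      have hmu : u ∈ SigmaSq s q N := by
        constructor
        · unfold CSparse at hz ⊢
          apply le_trans (Finset.card_le_card _) hz
          intro j hj
          rw [Finset.mem_filter] at hj ⊢
          refine ⟨Finset.mem_univ j, fun h' => hj.2 ?_⟩
          simp [hu, Pi.smul_apply, h']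
        · rw [hu, cnorm_smul hq, ← ht, abs_of_pos (by positivity)]
          field_simp
      have hzu : z = t • u := by
        rw [hu, smul_smul, mul_inv_cancel₀ (ne_of_gt ht0), one_smul]
      have heq : c⁻¹ • z = (t/c) • u + (1 - t/c) • (0 : Fin N → ℂ) := by
        rw [hzu, smul_smul, smul_zero, add_zero]
        congr 1
        field_simp
      rw [heq]
      exact (convex_convexHull ℝ (SigmaSq s q N)) (subset_convexHull ℝ _ hmu) h0K
        (by positivity) (by
          have : t/c ≤ 1 := (div_le_one h).2 hc
          linarith) (by ring)

lemma mem_add {a b : Fin N → ℂ} {c d : ℝ}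
    (hc : 0 ≤ c) (hd : 0 ≤ d)
    (ha : a ∈ c • convexHull ℝ (SigmaSq s q N))
    (hb : b ∈ d • convexHull ℝ (SigmaSq s q N)) :
    a + b ∈ (c + d) • convexHull ℝ (SigmaSq s q N) := by
  rw [(convex_convexHull ℝ (SigmaSq s q N)).add_smul hc hd]
  exact Set.add_mem_add ha hb

lemma mem_mono (hq : 1 ≤ q) (hs : 1 ≤ s) (hN : 0 < N) {a : Fin N → ℂ} {c d : ℝ}
    (hc : 0 ≤ c) (hcd : c ≤ d)
    (ha : a ∈ c • convexHull ℝ (SigmaSq s q N)) :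
    a ∈ d • convexHull ℝ (SigmaSq s q N) := by
  have h0 : (0 : Fin N → ℂ) ∈ (d - c) • convexHull ℝ (SigmaSq s q N) := by
    have := Set.smul_mem_smul_set (a := d - c) (zero_mem_K hq hs hN)
    simpa using this
  have := mem_add hc (by linarith) ha h0
  simpa using this

/-- The tail bound for the top-s set: every entry outside T is at most the average over T,
and the resulting coefficient identity. -/
lemma top_bound (hs : 1 ≤ s) {y : Fin N → ℂ} {T : Finset (Fin N)} (hTcard : T.card = s)
    (htop : ∀ i ∈ Finset.univ.filter (fun i => y i ≠ 0), i ∉ T →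
      ∀ j ∈ T, ‖y i‖ ≤ ‖y j‖) :
    ∀ i, ‖restrict Tᶜ y i‖ ≤ (∑ j ∈ T, ‖y j‖) / s := by
  have hspos : (0:ℝ) < s := by exact_mod_cast hs
  have hsum0 : 0 ≤ ∑ j ∈ T, ‖y j‖ :=
    Finset.sum_nonneg fun j _ => norm_nonneg _
  intro i
  by_cases hiT : i ∈ T
  · simp [restrict, hiT, div_nonneg hsum0 (le_of_lt hspos)]
  · have hri : restrict Tᶜ y i = y i := by simp [restrict, hiT]
    rw [hri]
    by_cases hyi : y i = 0
    · simp [hyi, div_nonneg hsum0 (le_of_lt hspos)]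
    · have hkey : (s : ℝ) * ‖y i‖ ≤ ∑ j ∈ T, ‖y j‖ := by
        have := htop i (Finset.mem_filter.2 ⟨Finset.mem_univ i, hyi⟩) hiT
        calc (s : ℝ) * ‖y i‖ = ∑ _j ∈ T, ‖y i‖ := by
              rw [Finset.sum_const, hTcard, nsmul_eq_mul]
          _ ≤ ∑ j ∈ T, ‖y j‖ := Finset.sum_le_sum fun j hj => this j hj
      rw [le_div_iff₀ hspos]
      linarith

lemma sum_abs_restrict_compl (T : Finset (Fin N)) (y : Fin N → ℂ) :
    ∑ i, ‖restrict Tᶜ y i‖ = ∑ i ∈ Tᶜ, ‖y i‖ := by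
  rw [← Finset.sum_filter_add_sum_filter_not Finset.univ (fun i => i ∈ Tᶜ)]
  have h1 : ∀ i ∈ Finset.univ.filter (fun i => i ∈ Tᶜ),
      ‖restrict Tᶜ y i‖ = ‖y i‖ := by
    intro i hi
    rw [Finset.mem_filter] at hi
    simp [restrict, hi.2]
  have h2 : ∀ i ∈ Finset.univ.filter (fun i => ¬ i ∈ Tᶜ),
      ‖restrict Tᶜ y i‖ = 0 := by
    intro i hi
    rw [Finset.mem_filter] at hi
    simp [restrict, hi.2]
  rw [Finset.sum_congr rfl h1, Finset.sum_congr rfl h2, Finset.sum_const_zero, add_zero,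
    Finset.filter_mem_eq_inter, Finset.univ_inter]

lemma support_restrict_compl (T : Finset (Fin N)) (y : Fin N → ℂ) :
    (Finset.univ.filter fun i => restrict Tᶜ y i ≠ 0)
      = (Finset.univ.filter fun i => y i ≠ 0) \ T := by
  ext i
  simp only [Finset.mem_filter, Finset.mem_sdiff, Finset.mem_univ, true_and, restrict]
  by_cases hiT : i ∈ T <;> simp [hiT]

lemma restrict_sparse (T : Finset (Fin N)) (y : Fin N → ℂ) (hT : T.card ≤ s) :
    CSparse s (restrict T y) := by
  unfold CSparse
  refine le_trans (Finset.card_le_card ?_) hT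
  intro i hi
  rw [Finset.mem_filter] at hi
  by_contra h
  exact hi.2 (by simp [restrict, h])

/-- Main induction lemma: any vector bounded by b belongs to
(s^{1/q} b + s^{1/q-1} ‖y‖₁) • conv(Σ_s^q). -/
lemma lemB (hq : 1 ≤ q) (hs : 1 ≤ s) (hN : 0 < N) (m : ℕ) :
    ∀ y : Fin N → ℂ, (Finset.univ.filter fun i => y i ≠ 0).card ≤ m →
    ∀ b : ℝ, 0 ≤ b → (∀ i, ‖y i‖ ≤ b) →
    y ∈ ((s:ℝ)^(1/q) * b + (s:ℝ)^(1/q-1) * ∑ i, ‖y i‖) •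
      convexHull ℝ (SigmaSq s q N) := by
  have hspos : (0:ℝ) < s := by exact_mod_cast hs
  induction m with
  | zero =>
    intro y hy b hb0 hb
    have hy0 : y = 0 := by
      funext i
      by_contra h
      have : i ∈ Finset.univ.filter fun i => y i ≠ 0 := Finset.mem_filter.2 ⟨Finset.mem_univ i, h⟩
      have := Finset.card_pos.2 ⟨i, this⟩
      omega
    apply sparse_mem hq hs hN
    · rw [hy0]; unfold CSparse; simp
    · have hc : cnorm q y = 0 := by
        have hq0 : q ≠ 0 := by positivity
        rw [hy0]
        unfold cnorm
        simp only [Pi.zero_apply, norm_zero, Real.zero_rpow hq0, Finset.sum_const_zero]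
        exact Real.zero_rpow (by positivity)
      rw [hc]
      have : 0 ≤ ∑ i, ‖y i‖ := Finset.sum_nonneg fun i _ => norm_nonneg _
      positivity
  | succ m ih =>
    intro y hy b hb0 hb
    by_cases hA : (Finset.univ.filter fun i => y i ≠ 0).card ≤ s
    · apply sparse_mem hq hs hN hA
      have h1 : cnorm q y ≤ (s:ℝ)^(1/q) * b := cnorm_sparse_le hq hA hb0 hb
      have h2 : 0 ≤ (s:ℝ)^(1/q-1) * ∑ i, ‖y i‖ := by
        have : 0 ≤ ∑ i, ‖y i‖ := Finset.sum_nonneg fun i _ => norm_nonneg _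
        positivity
      linarith
    · push_neg at hA
      obtain ⟨T, hTsub, hTcard, htop⟩ := exists_top (Finset.univ.filter fun i => y i ≠ 0)
        (fun i => ‖y i‖) (le_of_lt hA)
      set y1 := restrict T y with hy1
      set y2 := restrict Tᶜ y with hy2
      have hsplit : y = y1 + y2 := by
        funext i
        by_cases hiT : i ∈ T <;> simp [hy1, hy2, restrict, hiT]
      set b' := (∑ j ∈ T, ‖y j‖) / s with hb'
      have hsum0 : 0 ≤ ∑ j ∈ T, ‖y j‖ :=
        Finset.sum_nonneg fun j _ => norm_nonneg _
      have hb'0 : 0 ≤ b' := div_nonneg hsum0 (le_of_lt hspos)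
      have hbnd : ∀ i, ‖y2 i‖ ≤ b' := top_bound hs hTcard htop
      have hcard2 : (Finset.univ.filter fun i => y2 i ≠ 0).card ≤ m := by
        rw [hy2, support_restrict_compl, Finset.card_sdiff_of_subset hTsub]
        omega
      have h2 := ih y2 hcard2 b' hb'0 hbnd
      have h1 : y1 ∈ ((s:ℝ)^(1/q) * b) • convexHull ℝ (SigmaSq s q N) := by
        apply sparse_mem hq hs hN (restrict_sparse T y (le_of_eq hTcard))
        apply cnorm_sparse_le hq _ hb0
        · intro i
          by_cases hiT : i ∈ T
          · simpa [hy1, restrict, hiT] using hb i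
          · simp [hy1, restrict, hiT, hb0]
        · unfold CSparse at *
          have := restrict_sparse (s := s) T y (le_of_eq hTcard)
          exact this
      have hsum_split : ∑ i, ‖y2 i‖ = ∑ i ∈ Tᶜ, ‖y i‖ :=
        sum_abs_restrict_compl T y
      have hcoeff : (s:ℝ)^(1/q) * b' + (s:ℝ)^(1/q-1) * ∑ i, ‖y2 i‖
          = (s:ℝ)^(1/q-1) * ∑ i, ‖y i‖ := by
        have hpow : (s:ℝ)^(1/q) * b' = (s:ℝ)^(1/q-1) * ∑ j ∈ T, ‖y j‖ := by
          rw [hb', Real.rpow_sub hspos, Real.rpow_one]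
          field_simp
        rw [hpow, hsum_split, ← mul_add, ← Finset.sum_add_sum_compl T (fun i => ‖y i‖)]
      have hfin := mem_add (by positivity)
        (mul_nonneg (Real.rpow_nonneg (Nat.cast_nonneg s) _)
          (Finset.sum_nonneg fun i _ => norm_nonneg _))
        h1 (hcoeff ▸ h2)
      rw [← hsplit] at hfin
      exact hfin

/-- Decomposition lemma: y ∈ (c + s^{1/q-1}‖y‖₁) • conv(Σ_s^q) whenever cnorm q y ≤ c. -/
lemma lemC (hq : 1 ≤ q) (hs : 1 ≤ s) (hN : 0 < N) {y : Fin N → ℂ} {c : ℝ}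
    (hc : cnorm q y ≤ c) :
    y ∈ (c + (s:ℝ)^(1/q-1) * ∑ i, ‖y i‖) • convexHull ℝ (SigmaSq s q N) := by
  have hspos : (0:ℝ) < s := by exact_mod_cast hs
  have hl1 : 0 ≤ ∑ i, ‖y i‖ := Finset.sum_nonneg fun i _ => norm_nonneg _
  by_cases hA : (Finset.univ.filter fun i => y i ≠ 0).card ≤ s
  · apply sparse_mem hq hs hN hA
    have : 0 ≤ (s:ℝ)^(1/q-1) * ∑ i, ‖y i‖ := by positivity
    linarith
  · push_neg at hA
    obtain ⟨T, hTsub, hTcard, htop⟩ := exists_top (Finset.univ.filter fun i => y i ≠ 0)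
      (fun i => ‖y i‖) (le_of_lt hA)
    set y1 := restrict T y with hy1
    set y2 := restrict Tᶜ y with hy2
    have hsplit : y = y1 + y2 := by
      funext i
      by_cases hiT : i ∈ T <;> simp [hy1, hy2, restrict, hiT]
    set b' := (∑ j ∈ T, ‖y j‖) / s with hb'
    have hsum0 : 0 ≤ ∑ j ∈ T, ‖y j‖ :=
      Finset.sum_nonneg fun j _ => norm_nonneg _
    have hb'0 : 0 ≤ b' := div_nonneg hsum0 (le_of_lt hspos)
    have hbnd : ∀ i, ‖y2 i‖ ≤ b' := top_bound hs hTcard htop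
    have h2 := lemB hq hs hN (Finset.univ.filter fun i => y2 i ≠ 0).card y2 (le_refl _) b' hb'0 hbnd
    have h1 : y1 ∈ c • convexHull ℝ (SigmaSq s q N) := by
      apply sparse_mem hq hs hN (restrict_sparse T y (le_of_eq hTcard))
      exact le_trans (cnorm_restrict_le hq T y) hc
    have hsum_split : ∑ i, ‖y2 i‖ = ∑ i ∈ Tᶜ, ‖y i‖ :=
      sum_abs_restrict_compl T y
    have hcoeff : (s:ℝ)^(1/q) * b' + (s:ℝ)^(1/q-1) * ∑ i, ‖y2 i‖
        = (s:ℝ)^(1/q-1) * ∑ i, ‖y i‖ := by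
      have hpow : (s:ℝ)^(1/q) * b' = (s:ℝ)^(1/q-1) * ∑ j ∈ T, ‖y j‖ := by
        rw [hb', Real.rpow_sub hspos, Real.rpow_one]
        field_simp
      rw [hpow, hsum_split, ← mul_add, ← Finset.sum_add_sum_compl T (fun i => ‖y i‖)]
    have hfin := mem_add (le_trans (cnorm_nonneg q y1) (le_trans (cnorm_restrict_le hq T y) hc))
      (mul_nonneg (Real.rpow_nonneg (Nat.cast_nonneg s) _)
        (Finset.sum_nonneg fun i _ => norm_nonneg _)) h1 (hcoeff ▸ h2)
    rw [← hsplit] at hfin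
    exact hfin

end StatementAux

/-- T_{ρ,s}^q ∩ B_{ℓ_q} ⊆ (2 + 1/(ρθ)) · D_s^q. -/
theorem Tcone_inter_ball_subset {N : ℕ} (θ ρ : ℝ) (hθ : θ ∈ Set.Ioo (0:ℝ) 1)
    (hρ : ρ ∈ Set.Ioo (0:ℝ) 1) (q : ℝ) (hq : 1 ≤ q) (s : ℕ) (hs : 1 ≤ s)
    (ω : Fin N → ℝ) (hω : ∀ i, ω i ∈ Set.Icc θ 1) :
    Tcone ρ s q ω ∩ {x | cnorm q x ≤ 1} ⊆
      (2 + 1 / (ρ * θ)) • convexHull ℝ (SigmaSq s q N) := by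
  open StatementAux in
  rintro x ⟨⟨S, hScard, hSineq⟩, hxball⟩
  have hθ0 : 0 < θ := hθ.1
  have hρ0 : 0 < ρ := hρ.1
  have hN : 0 < N := by
    have : S.Nonempty := Finset.card_pos.1 (hScard ▸ hs)
    obtain ⟨i, _⟩ := this
    exact i.pos
  have hspos : (0:ℝ) < s := by exact_mod_cast hs
  set K := convexHull ℝ (SigmaSq s q N) with hK
  set y := restrict Sᶜ x with hy
  -- the head part
  have hx1 : restrict S x ∈ (1:ℝ) • K := by
    apply sparse_mem hq hs hN (restrict_sparse S x (le_of_eq hScard))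
    exact le_trans (cnorm_restrict_le hq S x) hxball
  -- ℓ¹ bound on the tail
  have hwnorm : wnorm ω y ≤ (s:ℝ)^(1 - 1/q) / ρ := by
    have hpow : (0:ℝ) < (s:ℝ)^(1 - 1/q) := Real.rpow_pos_of_pos hspos _
    have h1 : ρ / (s:ℝ)^(1 - 1/q) * wnorm ω y ≤ 1 :=
      le_trans hSineq (le_trans (cnorm_restrict_le hq S x) hxball)
    rw [div_mul_eq_mul_div, div_le_one hpow] at h1
    rw [le_div_iff₀ hρ0]
    linarith [mul_comm ρ (wnorm ω y)]
  have hl1 : ∑ i, ‖y i‖ ≤ (s:ℝ)^(1 - 1/q) / (ρ * θ) := by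
    have h1 : θ * ∑ i, ‖y i‖ ≤ wnorm ω y := by
      rw [Finset.mul_sum]
      apply Finset.sum_le_sum
      intro i _
      exact mul_le_mul_of_nonneg_right (hω i).1 (norm_nonneg _)
    rw [div_mul_eq_div_div]
    rw [le_div_iff₀ hθ0]
    calc (∑ i, ‖y i‖) * θ = θ * ∑ i, ‖y i‖ := mul_comm _ _
      _ ≤ wnorm ω y := h1
      _ ≤ (s:ℝ)^(1 - 1/q) / ρ := hwnorm
  -- tail membership
  have hy2 : y ∈ ((1:ℝ) + (s:ℝ)^(1/q-1) * ∑ i, ‖y i‖) • K :=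
    lemC hq hs hN (le_trans (cnorm_restrict_le hq Sᶜ x) hxball)
  have hl1' : (s:ℝ)^(1/q-1) * ∑ i, ‖y i‖ ≤ 1 / (ρ * θ) := by
    have hpow : (0:ℝ) < (s:ℝ)^(1/q-1) := Real.rpow_pos_of_pos hspos _
    calc (s:ℝ)^(1/q-1) * ∑ i, ‖y i‖
        ≤ (s:ℝ)^(1/q-1) * ((s:ℝ)^(1 - 1/q) / (ρ * θ)) :=
          mul_le_mul_of_nonneg_left hl1 (le_of_lt hpow)
      _ = 1 / (ρ * θ) := by
          rw [mul_div_assoc', ← Real.rpow_add hspos]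
          norm_num
  have hy3 : y ∈ ((1:ℝ) + 1/(ρ * θ)) • K := by
    apply mem_mono hq hs hN _ _ hy2
    · have : 0 ≤ ∑ i, ‖y i‖ := Finset.sum_nonneg fun i _ => norm_nonneg _
      positivity
    · linarith
  have hsplit : x = restrict S x + y := by
    funext i
    by_cases hiS : i ∈ S <;> simp [hy, restrict, hiS]
  have hfin := mem_add (by norm_num) (by positivity) hx1 hy3
  rw [← hsplit] at hfin
  have : (1:ℝ) + (1 + 1/(ρ * θ)) = 2 + 1/(ρ * θ) := by ring
  rw [this] at hfin
  exact hfin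

end
end
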